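/- arXiv:2511.00895 — 5 statements merged into one kernel-verified Lean document; each statement's English description precedes it below -/
import Mathlib

section
/- Let η > 0 and let X1 and S1 be independent integrable random variables with S1 ≥ 0. For w ∈ [0,1] set Z1^w = wS1 + 1 − w and μ_w = w·E[S1] + 1 − w, and for capital levels R0^w, R0^0 ≥ 0 set C0^w = E[(R0^w·Z1^w − X1)^+]/(1+η), C0^0 = E[(R0^0 − X1)^+]/(1+η), V0^w = R0^w − C0^w and V0^0 = R0^0 − C0^0. If R0^w·μ_w ≥ R0^0 then C0^w ≥ C0^0. If moreover R0^0 ≥ R0^w, then V0^w ≤ V0^0. -/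
open MeasureTheory ProbabilityTheory Real Set

noncomputable def VaR {Ω : Type*} [MeasurableSpace Ω] (P : Measure Ω) (β : ℝ) (Y : Ω → ℝ) : ℝ :=
  sInf {y : ℝ | 1 - β ≤ (P {ω | -Y ω ≤ y}).toReal}

noncomputable def ES {Ω : Type*} [MeasurableSpace Ω] (P : Measure Ω) (α : ℝ) (Y : Ω → ℝ) : ℝ :=
  (1 / α) * ∫ β in (0:ℝ)..α, VaR P β Y

noncomputable def stdNormalCDF (x : ℝ) : ℝ := ((gaussianReal 0 1) (Iic x)).toReal

noncomputable def stdNormalPDF (x : ℝ) : ℝ := (Real.sqrt (2 * π))⁻¹ * Real.exp (-x ^ 2 / 2)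


/-- comparison of shareholder value and premium between risky
and risk-less investment (Proposition `icxV02` of the paper). -/
theorem C0_V0_comparison
    {Ω : Type*} [MeasurableSpace Ω] (P : Measure Ω) [IsProbabilityMeasure P]
    (η : ℝ) (hη : 0 < η)
    (X1 S1 : Ω → ℝ) (hX : Integrable X1 P) (hS : Integrable S1 P)
    (hindep : IndepFun X1 S1 P) (hS1nn : ∀ ω, 0 ≤ S1 ω)
    (w : ℝ) (hw : w ∈ Icc (0:ℝ) 1)
    (Rw R0 : ℝ) (hRw : 0 ≤ Rw) (hR0 : 0 ≤ R0)
    (hμ : R0 ≤ Rw * (w * (∫ ω, S1 ω ∂P) + 1 - w)) :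
    (∫ ω, max (R0 - X1 ω) 0 ∂P) / (1 + η)
        ≤ (∫ ω, max (Rw * (w * S1 ω + 1 - w) - X1 ω) 0 ∂P) / (1 + η)
    ∧ (Rw ≤ R0 →
        Rw - (∫ ω, max (Rw * (w * S1 ω + 1 - w) - X1 ω) 0 ∂P) / (1 + η)
          ≤ R0 - (∫ ω, max (R0 - X1 ω) 0 ∂P) / (1 + η)) := by
  set φ : ℝ → ℝ := fun x => if x < R0 then 1 else 0 with hφdef
  set ψ : ℝ → ℝ := fun s => Rw * (w * s + 1 - w) - R0 with hψdef
  have hφm : Measurable φ := Measurable.ite measurableSet_Iio measurable_const measurable_const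
  have hψm : Measurable ψ := by fun_prop
  -- integrability of h := ψ ∘ S1
  have eψ : (fun ω => ψ (S1 ω)) = fun ω => (Rw * w) * S1 ω + (Rw * (1 - w) - R0) := by
    funext ω; simp only [hψdef]; ring
  have hh : Integrable (fun ω => ψ (S1 ω)) P := by
    rw [eψ]; exact (hS.const_mul _).add (integrable_const _)
  -- integrability of g := φ ∘ X1
  have hgmeas : AEStronglyMeasurable (fun ω => φ (X1 ω)) P :=
    (hφm.comp_aemeasurable hX.aemeasurable).aestronglyMeasurable
  have hbdd : ∀ ω, ‖φ (X1 ω)‖ ≤ 1 := by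
    intro ω; simp only [hφdef]; split <;> simp
  have hg : Integrable (fun ω => φ (X1 ω)) P := by
    have := (integrable_const (1:ℝ)).bdd_mul hgmeas (Filter.Eventually.of_forall hbdd)
    simpa using this
  have hgh : Integrable (fun ω => φ (X1 ω) * ψ (S1 ω)) P :=
    hh.bdd_mul hgmeas (Filter.Eventually.of_forall hbdd)
  -- independence
  have hind2 : IndepFun (fun ω => φ (X1 ω)) (fun ω => ψ (S1 ω)) P :=
    hindep.comp hφm hψm
  have hmul : (∫ ω, φ (X1 ω) * ψ (S1 ω) ∂P)
      = (∫ ω, φ (X1 ω) ∂P) * ∫ ω, ψ (S1 ω) ∂P := by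
    have := hind2.integral_mul_eq_mul_integral hg.aestronglyMeasurable hh.aestronglyMeasurable
    simpa [Pi.mul_apply] using this
  -- ∫ ψ(S1) ≥ 0
  have hψint : (∫ ω, ψ (S1 ω) ∂P) = Rw * (w * (∫ ω, S1 ω ∂P) + 1 - w) - R0 := by
    rw [eψ, integral_add (hS.const_mul _) (integrable_const _), integral_const_mul,
      integral_const]
    simp [measure_univ]
    ring
  have hψnn : 0 ≤ ∫ ω, ψ (S1 ω) ∂P := by rw [hψint]; linarith
  have hgnn : 0 ≤ ∫ ω, φ (X1 ω) ∂P := by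
    apply integral_nonneg; intro ω; simp only [hφdef]; split <;> norm_num
  have hcross : 0 ≤ ∫ ω, φ (X1 ω) * ψ (S1 ω) ∂P := by
    rw [hmul]; exact mul_nonneg hgnn hψnn
  -- integrability of the max functions
  have hmax0 : Integrable (fun ω => max (R0 - X1 ω) 0) P :=
    ((integrable_const R0).sub hX).pos_part
  have hmaxw : Integrable (fun ω => max (Rw * (w * S1 ω + 1 - w) - X1 ω) 0) P := by
    have : Integrable (fun ω => (ψ (S1 ω) + R0) - X1 ω) P :=
      (hh.add (integrable_const R0)).sub hX
    have := this.pos_part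
    simpa [hψdef, sub_add_cancel] using this
  -- pointwise key inequality
  have key : ∀ ω, max (R0 - X1 ω) 0 + φ (X1 ω) * ψ (S1 ω)
      ≤ max (Rw * (w * S1 ω + 1 - w) - X1 ω) 0 := by
    intro ω
    by_cases hx : X1 ω < R0
    · simp only [hφdef, hψdef, if_pos hx, one_mul]
      have h1 : max (R0 - X1 ω) 0 = R0 - X1 ω := max_eq_left (by linarith)
      have h2 := le_max_left (Rw * (w * S1 ω + 1 - w) - X1 ω) (0:ℝ)
      linarith
    · simp only [hφdef, if_neg hx, zero_mul, add_zero]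
      have h1 : max (R0 - X1 ω) 0 = 0 := max_eq_right (by push_neg at hx; linarith)
      rw [h1]
      exact le_max_right _ _
  have hint : (∫ ω, max (R0 - X1 ω) 0 ∂P) + ∫ ω, φ (X1 ω) * ψ (S1 ω) ∂P
      ≤ ∫ ω, max (Rw * (w * S1 ω + 1 - w) - X1 ω) 0 ∂P := by
    rw [← integral_add hmax0 hgh]
    exact integral_mono (hmax0.add hgh) hmaxw key
  have hmain : (∫ ω, max (R0 - X1 ω) 0 ∂P)
      ≤ ∫ ω, max (Rw * (w * S1 ω + 1 - w) - X1 ω) 0 ∂P := by linarith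
  have hηpos : (0:ℝ) < 1 + η := by linarith
  constructor
  · gcongr
  · intro hRwR0
    have hdiv : (∫ ω, max (R0 - X1 ω) 0 ∂P) / (1 + η)
        ≤ (∫ ω, max (Rw * (w * S1 ω + 1 - w) - X1 ω) 0 ∂P) / (1 + η) := by gcongr
    linarith
end

section
/- Let α ∈ (0,1/2), q = Φ^{-1}(1−α) > 0, and let ν > 0, σ > 0, γ > ν·q and μ > max(1, σ·q). For w ∈ [0,1] set μ_w = wμ + 1 − w and σ_w = wσ, and let R0^w be the unique positive solution of γ − r·μ_w + q·√(r²σ_w² + ν²) = 0. Then: (a) the map w ↦ R0^w is strictly convex on [0,1]; (b) R0^w < R0^0 = γ + ν·q for all w ∈ (0, ŵ), where ŵ = 1 if μ ≥ 1 + σ·q, and otherwise ŵ = 2(μ−1)νq / ((1 + σq − μ)(μ − 1 + σq)(γ + νq)). -/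
open MeasureTheory ProbabilityTheory Real Set

set_option maxHeartbeats 1600000
section AuxRZero


private lemma aux_cauchy_strict (u1 v1 u2 v2 : ℝ) (hne : u1 * v2 ≠ u2 * v1) :
    u1*u2 + v1*v2 < Real.sqrt (u1^2+v1^2) * Real.sqrt (u2^2+v2^2) := by
  have h1 : 0 < (u1*v2 - u2*v1)^2 := by
    have := sub_ne_zero.mpr hne
    positivity
  have hn1 : (0:ℝ) ≤ Real.sqrt (u1^2+v1^2) := Real.sqrt_nonneg _
  have hn2 : (0:ℝ) ≤ Real.sqrt (u2^2+v2^2) := Real.sqrt_nonneg _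
  have e1 : Real.sqrt (u1^2+v1^2) ^ 2 = u1^2+v1^2 := Real.sq_sqrt (by positivity)
  have e2 : Real.sqrt (u2^2+v2^2) ^ 2 = u2^2+v2^2 := Real.sq_sqrt (by positivity)
  by_contra hcon
  push_neg at hcon
  nlinarith [mul_nonneg hn1 hn2, h1, e1, e2]

private lemma aux_sqrt_strict (u1 v1 u2 v2 a b : ℝ) (ha : 0 < a) (hb : 0 < b)
    (hne : u1 * v2 ≠ u2 * v1) :
    Real.sqrt ((a*u1+b*u2)^2 + (a*v1+b*v2)^2)
      < a * Real.sqrt (u1^2+v1^2) + b * Real.sqrt (u2^2+v2^2) := by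
  have hQ1 : 0 < u1^2 + v1^2 := by
    rcases eq_or_ne u1 0 with h|h
    · rcases eq_or_ne v1 0 with h'|h'
      · exfalso; apply hne; rw [h, h']; ring
      · positivity
    · positivity
  have hQ2 : 0 < u2^2 + v2^2 := by
    rcases eq_or_ne u2 0 with h|h
    · rcases eq_or_ne v2 0 with h'|h'
      · exfalso; apply hne; rw [h, h']; ring
      · positivity
    · positivity
  have hn1 : 0 < Real.sqrt (u1^2+v1^2) := Real.sqrt_pos.mpr hQ1
  have hn2 : 0 < Real.sqrt (u2^2+v2^2) := Real.sqrt_pos.mpr hQ2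
  have e1 : Real.sqrt (u1^2+v1^2) ^ 2 = u1^2+v1^2 := Real.sq_sqrt hQ1.le
  have e2 : Real.sqrt (u2^2+v2^2) ^ 2 = u2^2+v2^2 := Real.sq_sqrt hQ2.le
  have hrhs : 0 < a * Real.sqrt (u1^2+v1^2) + b * Real.sqrt (u2^2+v2^2) := by positivity
  rw [Real.sqrt_lt' hrhs]
  have hc := aux_cauchy_strict u1 v1 u2 v2 hne
  have e1' : a^2*Real.sqrt (u1^2+v1^2)^2 = a^2*(u1^2+v1^2) := by rw [e1]
  have e2' : b^2*Real.sqrt (u2^2+v2^2)^2 = b^2*(u2^2+v2^2) := by rw [e2]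
  nlinarith [e1', e2', mul_lt_mul_of_pos_left hc (mul_pos ha hb)]


noncomputable def auxS (q γ ν σ μ w : ℝ) : ℝ :=
  (γ*(1+(μ-1)*w) - q*Real.sqrt (ν^2*(1+(μ-1)*w)^2 + (γ^2-q^2*ν^2)*σ^2*w^2))
    / (γ^2-q^2*ν^2)

private lemma auxS_spec (q γ ν σ μ w : ℝ) (hq0 : 0 < q) (hν : 0 < ν) (hσ : 0 < σ)
    (hγ : ν*q < γ) (hμ1 : 1 < μ) (hμ2 : σ*q < μ) (hw0 : 0 ≤ w) (hw1 : w ≤ 1) :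
    0 < auxS q γ ν σ μ w ∧
    γ * auxS q γ ν σ μ w + q * Real.sqrt (σ^2*w^2 + ν^2*(auxS q γ ν σ μ w)^2)
      = 1 + (μ-1)*w := by
  have hνq : 0 < ν*q := mul_pos hν hq0
  have hγ0 : 0 < γ := lt_trans hνq hγ
  have hC : 0 < γ^2 - q^2*ν^2 := by nlinarith
  have hB0 : 0 < 1 + (μ-1)*w := by nlinarith
  have hBσ : q*σ*w < 1 + (μ-1)*w := by
    rcases le_or_gt (μ - σ*q) 1 with h|h
    · nlinarith [mul_nonneg hw0 (sub_pos.mpr hμ2).le]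
    · nlinarith [mul_nonneg hw0 (sub_pos.mpr hμ2).le]
  have hQpos : 0 < ν^2*(1+(μ-1)*w)^2 + (γ^2-q^2*ν^2)*σ^2*w^2 := by
    have h1 : 0 < ν^2*(1+(μ-1)*w)^2 := by positivity
    nlinarith [mul_nonneg (mul_nonneg hC.le (sq_nonneg σ)) (sq_nonneg w)]
  set Qv := ν^2*(1+(μ-1)*w)^2 + (γ^2-q^2*ν^2)*σ^2*w^2 with hQv
  have hsqrtQ : Real.sqrt Qv ^ 2 = Qv := Real.sq_sqrt hQpos.le
  have hsqrtQ0 : 0 ≤ Real.sqrt Qv := Real.sqrt_nonneg _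
  have hSdef : auxS q γ ν σ μ w
      = (γ*(1+(μ-1)*w) - q*Real.sqrt Qv)/(γ^2-q^2*ν^2) := by
    rw [auxS, hQv]
  set sv := auxS q γ ν σ μ w with hsv
  -- positivity of sv
  have h1 : q^2*Qv < (γ*(1+(μ-1)*w))^2 := by
    have hBB : (0:ℝ) < 1 + (μ-1)*w + q*σ*w := by
      nlinarith [hB0, mul_nonneg (mul_nonneg hq0.le hσ.le) hw0]
    nlinarith [mul_pos (mul_pos hC (sub_pos.mpr hBσ)) hBB]
  have h2 : q*Real.sqrt Qv < γ*(1+(μ-1)*w) := by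
    nlinarith [h1, hsqrtQ, mul_nonneg hq0.le hsqrtQ0, mul_pos hγ0 hB0]
  have hs0 : 0 < sv := by rw [hSdef]; exact div_pos (by linarith) hC
  refine ⟨hs0, ?_⟩
  -- B - γ sv ≥ 0
  have h3 : (q*ν^2*(1+(μ-1)*w))^2 ≤ (γ*Real.sqrt Qv)^2 := by
    nlinarith [hsqrtQ, mul_nonneg (mul_nonneg hC.le (sq_nonneg σ)) (sq_nonneg w),
      sq_nonneg (ν*(1+(μ-1)*w)), mul_pos hγ0 hγ0]
  have h4 : q*ν^2*(1+(μ-1)*w) ≤ γ*Real.sqrt Qv := by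
    nlinarith [h3, mul_nonneg (mul_nonneg hq0.le (sq_nonneg ν)) hB0.le,
      mul_nonneg hγ0.le hsqrtQ0]
  have hBγs : γ*sv ≤ 1 + (μ-1)*w := by
    rw [hSdef, ← mul_div_assoc, div_le_iff₀ hC]
    nlinarith [h4]
  -- quadratic identity
  have hCs : (γ^2-q^2*ν^2) * sv = γ*(1+(μ-1)*w) - q*Real.sqrt Qv := by
    rw [hSdef]; field_simp
  have h5 : (γ*(1+(μ-1)*w) - (γ^2-q^2*ν^2)*sv)^2 = q^2 * Qv := by
    have e : γ*(1+(μ-1)*w) - (γ^2-q^2*ν^2)*sv = q*Real.sqrt Qv := by linarith [hCs]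
    rw [e, mul_pow, hsqrtQ]
  have hquad : (γ^2-q^2*ν^2)*sv^2 - 2*γ*(1+(μ-1)*w)*sv + (1+(μ-1)*w)^2 - q^2*σ^2*w^2 = 0 := by
    have h6 : (γ^2-q^2*ν^2) * ((γ^2-q^2*ν^2)*sv^2 - 2*γ*(1+(μ-1)*w)*sv + (1+(μ-1)*w)^2 - q^2*σ^2*w^2) = 0 := by
      rw [hQv] at h5
      linear_combination h5
    exact (mul_eq_zero.mp h6).resolve_left hC.ne'
  -- key sqrt identity
  have hX : (0:ℝ) ≤ σ^2*w^2 + ν^2*sv^2 := by positivity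
  have h6 : (q*Real.sqrt (σ^2*w^2+ν^2*sv^2))^2 = (1+(μ-1)*w - γ*sv)^2 := by
    rw [mul_pow, Real.sq_sqrt hX]
    linear_combination -hquad
  have h7 : q*Real.sqrt (σ^2*w^2+ν^2*sv^2) = 1+(μ-1)*w - γ*sv := by
    have hl : 0 ≤ q*Real.sqrt (σ^2*w^2+ν^2*sv^2) := by positivity
    have hr : 0 ≤ 1+(μ-1)*w - γ*sv := by linarith
    calc q*Real.sqrt (σ^2*w^2+ν^2*sv^2)
        = Real.sqrt ((q*Real.sqrt (σ^2*w^2+ν^2*sv^2))^2) := (Real.sqrt_sq hl).symm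
      _ = Real.sqrt ((1+(μ-1)*w - γ*sv)^2) := by rw [h6]
      _ = 1+(μ-1)*w - γ*sv := Real.sqrt_sq hr
  linarith [h7]





private lemma auxS_concave (q γ ν σ μ : ℝ) (hq0 : 0 < q) (hν : 0 < ν) (hσ : 0 < σ)
    (hγ : ν*q < γ) (w1 w2 a b : ℝ) (hw12 : w1 ≠ w2)
    (ha : 0 < a) (hb : 0 < b) (hab : a + b = 1) :
    a * auxS q γ ν σ μ w1 + b * auxS q γ ν σ μ w2 < auxS q γ ν σ μ (a*w1+b*w2) := by
  have hνq : 0 < ν*q := mul_pos hν hq0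
  have hγ0 : 0 < γ := lt_trans hνq hγ
  have hC : 0 < γ^2 - q^2*ν^2 := by nlinarith
  have hsc : 0 < Real.sqrt (γ^2-q^2*ν^2) := Real.sqrt_pos.mpr hC
  have ht : Real.sqrt (γ^2-q^2*ν^2) ^ 2 = γ^2-q^2*ν^2 := Real.sq_sqrt hC.le
  have hb' : b = 1 - a := by linarith
  subst hb'
  set t := Real.sqrt (γ^2-q^2*ν^2) with htdef
  -- the vectors
  set u1 := ν*(1+(μ-1)*w1) with hu1
  set v1 := t*σ*w1 with hv1
  set u2 := ν*(1+(μ-1)*w2) with hu2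
  set v2 := t*σ*w2 with hv2
  have hne : u1 * v2 ≠ u2 * v1 := by
    rw [hu1, hv1, hu2, hv2]
    intro h
    apply hw12
    have hz : ν*t*σ*(w2-w1) = 0 := by linear_combination h
    have hnz : ν*t*σ ≠ 0 := by positivity
    have := mul_eq_zero.mp hz
    rcases this with h'|h'
    · exact absurd h' hnz
    · linarith
  have hmain := aux_sqrt_strict u1 v1 u2 v2 a (1-a) ha hb hne
  have e1 : u1^2+v1^2 = ν^2*(1+(μ-1)*w1)^2 + (γ^2-q^2*ν^2)*σ^2*w1^2 := by
    rw [hu1, hv1]; linear_combination σ^2*w1^2*ht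
  have e2 : u2^2+v2^2 = ν^2*(1+(μ-1)*w2)^2 + (γ^2-q^2*ν^2)*σ^2*w2^2 := by
    rw [hu2, hv2]; linear_combination σ^2*w2^2*ht
  have em : (a*u1+(1-a)*u2)^2 + (a*v1+(1-a)*v2)^2
      = ν^2*(1+(μ-1)*(a*w1+(1-a)*w2))^2 + (γ^2-q^2*ν^2)*σ^2*(a*w1+(1-a)*w2)^2 := by
    rw [hu1, hv1, hu2, hv2]; linear_combination σ^2*(a*w1+(1-a)*w2)^2*ht
  rw [e1, e2, em] at hmain
  rw [auxS, auxS, auxS]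
  rw [← mul_div_assoc, ← mul_div_assoc, ← add_div, div_lt_div_iff₀ hC hC]
  nlinarith [mul_pos (mul_pos hq0 (sub_pos.mpr hmain)) hC]

end AuxRZero

/-- `w ↦ R0^w` is strictly convex on `[0,1]` and stays below
`R0^0 = γ + ν·q` on `(0, ŵ)`. -/
theorem R0_strict_convex_and_below_riskless
    (α q γ ν σ μ : ℝ) (hα : α ∈ Ioo (0:ℝ) (1/2))
    (hq : stdNormalCDF q = 1 - α) (hq0 : 0 < q)
    (hν : 0 < ν) (hσ : 0 < σ) (hγ : ν * q < γ) (hμ : max 1 (σ * q) < μ)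
    (R : ℝ → ℝ)
    (hR : ∀ w ∈ Icc (0:ℝ) 1, 0 < R w ∧
        γ - R w * (w * μ + 1 - w) + q * Real.sqrt ((R w)^2 * (w * σ)^2 + ν^2) = 0)
    (hRuniq : ∀ w ∈ Icc (0:ℝ) 1, ∀ r : ℝ, 0 < r →
        γ - r * (w * μ + 1 - w) + q * Real.sqrt (r^2 * (w * σ)^2 + ν^2) = 0 → r = R w) :
    StrictConvexOn ℝ (Icc (0:ℝ) 1) R
    ∧ R 0 = γ + ν * q
    ∧ (∀ w : ℝ, 0 < w → w ≤ 1 →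
        w < (if 1 + σ * q ≤ μ then 1
             else 2 * (μ - 1) * ν * q
                / ((1 + σ * q - μ) * (μ - 1 + σ * q) * (γ + ν * q))) →
        R w < γ + ν * q) := by
  have hμ1 : (1:ℝ) < μ := lt_of_le_of_lt (le_max_left 1 (σ*q)) hμ
  have hμ2 : σ*q < μ := lt_of_le_of_lt (le_max_right 1 (σ*q)) hμ
  have hνq : 0 < ν*q := mul_pos hν hq0
  have hγ0 : 0 < γ := lt_trans hνq hγ
  have hγq : 0 < γ + ν*q := by linarith
  have hRS : ∀ w ∈ Icc (0:ℝ) 1, R w = (auxS q γ ν σ μ w)⁻¹ := by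
    intro w hw
    obtain ⟨hs0, heq⟩ := auxS_spec q γ ν σ μ w hq0 hν hσ hγ hμ1 hμ2 hw.1 hw.2
    refine (hRuniq w hw _ (by positivity) ?_).symm
    have hsvne : auxS q γ ν σ μ w ≠ 0 := ne_of_gt hs0
    have h1 : ((auxS q γ ν σ μ w)⁻¹)^2*(w*σ)^2 + ν^2
        = (σ^2*w^2 + ν^2*(auxS q γ ν σ μ w)^2) * ((auxS q γ ν σ μ w)⁻¹)^2 := by
      field_simp
    rw [h1, Real.sqrt_mul (by positivity), Real.sqrt_sq (by positivity)]
    have h2 : q*Real.sqrt (σ^2*w^2+ν^2*(auxS q γ ν σ μ w)^2)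
        = 1+(μ-1)*w - γ*auxS q γ ν σ μ w := by linarith [heq]
    field_simp
    rw [show w ^ 2 * σ ^ 2 + auxS q γ ν σ μ w ^ 2 * ν ^ 2 = σ^2*w^2+ν^2*(auxS q γ ν σ μ w)^2 by ring]
    linear_combination h2
  refine ⟨?_, ?_, ?_⟩
  · refine ⟨convex_Icc 0 1, ?_⟩
    intro x hx y hy hxy a b ha hb hab
    simp only [smul_eq_mul]
    have hmem : a*x+b*y ∈ Icc (0:ℝ) 1 := by
      constructor
      · nlinarith [mul_nonneg ha.le hx.1, mul_nonneg hb.le hy.1]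
      · nlinarith [mul_le_mul_of_nonneg_left hx.2 ha.le, mul_le_mul_of_nonneg_left hy.2 hb.le]
    rw [hRS x hx, hRS y hy, hRS _ hmem]
    have hs1 := (auxS_spec q γ ν σ μ x hq0 hν hσ hγ hμ1 hμ2 hx.1 hx.2).1
    have hs2 := (auxS_spec q γ ν σ μ y hq0 hν hσ hγ hμ1 hμ2 hy.1 hy.2).1
    have hconc := auxS_concave q γ ν σ μ hq0 hν hσ hγ x y a b hxy ha hb hab
    set s1 := auxS q γ ν σ μ x
    set s2 := auxS q γ ν σ μ y
    set sm := auxS q γ ν σ μ (a*x+b*y)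
    have hmid0 : 0 < a*s1+b*s2 := by positivity
    have hsm : 0 < sm := lt_trans hmid0 hconc
    have hstep1 : sm⁻¹ < (a*s1+b*s2)⁻¹ := by
      rw [inv_lt_inv₀ hsm hmid0]
      exact hconc
    have hstep2 : (a*s1+b*s2)⁻¹ ≤ a*s1⁻¹+b*s2⁻¹ := by
      have hpoly : s1*s2 ≤ (a*s2+b*s1)*(a*s1+b*s2) := by
        have hab3 : s1*s2*(a+b)^2 = s1*s2 := by rw [hab]; ring
        nlinarith [mul_nonneg (mul_nonneg ha.le hb.le) (sq_nonneg (s1-s2)), hab3]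
      rw [← one_div, div_le_iff₀ hmid0]
      have h12 : a*s1⁻¹+b*s2⁻¹ = (a*s2+b*s1)/(s1*s2) := by
        field_simp
      rw [h12, div_mul_eq_mul_div, le_div_iff₀ (mul_pos hs1 hs2), one_mul]
      exact hpoly
    linarith
  · refine (hRuniq 0 ⟨le_refl 0, zero_le_one⟩ _ (by positivity) ?_).symm
    have h0 : ((γ+ν*q)^2*((0:ℝ)*σ)^2 + ν^2) = ν^2 := by ring
    rw [h0, Real.sqrt_sq hν.le]; ring
  · intro w hw0 hw1 hwlt
    have hwmem : w ∈ Icc (0:ℝ) 1 := ⟨hw0.le, hw1⟩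
    obtain ⟨hs0, heq⟩ := auxS_spec q γ ν σ μ w hq0 hν hσ hγ hμ1 hμ2 hw0.le hw1
    rw [hRS w hwmem]
    have hC : 0 < γ^2 - q^2*ν^2 := by nlinarith
    set Qv := ν^2*(1+(μ-1)*w)^2 + (γ^2-q^2*ν^2)*σ^2*w^2 with hQv
    have hQpos : (0:ℝ) ≤ Qv := by rw [hQv]; positivity
    have hsqrtQ : Real.sqrt Qv ^ 2 = Qv := Real.sq_sqrt hQpos
    have hT : 0 < γ*(μ-1)*w + ν*q := by
      nlinarith [mul_pos (mul_pos hγ0 (by linarith : (0:ℝ) < μ-1)) hw0]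
    have hq2 : q^2*Qv < (γ*(μ-1)*w + ν*q)^2 := by
      by_cases hcase : 1 + σ*q ≤ μ
      · have h5 : q^2*σ^2 ≤ (μ-1)^2 := by
          nlinarith [mul_nonneg (by nlinarith [mul_pos hσ hq0] : (0:ℝ) ≤ μ-1-σ*q)
            (by nlinarith [mul_pos hσ hq0] : (0:ℝ) ≤ μ-1+σ*q)]
        rw [hQv]
        nlinarith [mul_pos hw0 (mul_pos (mul_pos (mul_pos hq0 hν) (by linarith : (0:ℝ) < μ-1)) (by linarith : (0:ℝ) < γ - q*ν)),
          mul_nonneg (mul_nonneg hC.le (sq_nonneg w)) (by linarith : (0:ℝ) ≤ (μ-1)^2 - q^2*σ^2)]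
      · rw [if_neg hcase] at hwlt
        have hD : 0 < (1+σ*q-μ)*(μ-1+σ*q)*(γ+ν*q) := by
          have hsq := mul_pos hσ hq0
          exact mul_pos (mul_pos (by linarith) (by nlinarith)) hγq
        have hwD : w*((1+σ*q-μ)*(μ-1+σ*q)*(γ+ν*q)) < 2*(μ-1)*ν*q := by
          rw [← lt_div_iff₀ hD]
          exact hwlt
        rw [hQv]
        nlinarith [mul_pos (mul_pos hw0 (by linarith : (0:ℝ) < γ - ν*q))
          (by linarith : (0:ℝ) < 2*(μ-1)*ν*q - w*((1+σ*q-μ)*(μ-1+σ*q)*(γ+ν*q)))]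
    have hqlt : q*Real.sqrt Qv < γ*(μ-1)*w + ν*q := by
      nlinarith [hq2, hsqrtQ, mul_nonneg hq0.le (Real.sqrt_nonneg Qv), hT]
    have hkey : (γ+ν*q)⁻¹ < auxS q γ ν σ μ w := by
      have e : (γ+ν*q)⁻¹ = (γ-ν*q)/(γ^2-q^2*ν^2) := by
        rw [eq_div_iff hC.ne']; field_simp; ring
      rw [e]
      simp only [auxS]
      rw [← hQv, div_lt_div_iff₀ hC hC]
      nlinarith [mul_pos hC (by linarith : (0:ℝ) < (γ*(1+(μ-1)*w) - q*Real.sqrt Qv) - (γ-ν*q))]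
    have hfin := inv_strictAnti₀ (by positivity : (0:ℝ) < (γ+ν*q)⁻¹) hkey
    rwa [inv_inv] at hfin
end

section
/- Let α ∈ (0,1/2), q = Φ^{-1}(1−α) > 0, η > 0, and let X1 ~ N(γ, ν²) and Z1 ~ N(μ, σ²) be independent with μ, γ, σ, ν > 0. Suppose R0 > 0 satisfies VaR_α(R0·Z1 − X1) = 0, i.e. γ − R0μ + q√(R0²σ² + ν²) = 0. Then, with δ(α) = φ(q)/q − α, C0 := E[(R0·Z1 − X1)^+]/(1+η) = (R0μ − γ)(1 + δ(α))/(1+η), and V0 := R0 − C0 = γ(1+δ(α))/(1+η) + R0·(1 + η − μ(1+δ(α)))/(1+η). -/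
open MeasureTheory ProbabilityTheory Real Set

open scoped NNReal ENNReal

lemma gaussianPDFReal_conv (m1 m2 : ℝ) (v1 v2 : ℝ≥0) (h1 : v1 ≠ 0) (h2 : v2 ≠ 0) (y : ℝ) :
    ∫ b, gaussianPDFReal m1 v1 (y - b) * gaussianPDFReal m2 v2 b
      = gaussianPDFReal (m1 + m2) (v1 + v2) y := by
  have hV1 : (0:ℝ) < v1 := by positivity
  have hV2 : (0:ℝ) < v2 := by positivity
  have hSpos : (0:ℝ) < (v1:ℝ) + v2 := by positivity
  have hApos : (0:ℝ) < ((v1:ℝ) + v2) / (2 * v1 * v2) := by positivity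
  have hfun : ∀ b, gaussianPDFReal m1 v1 (y - b) * gaussianPDFReal m2 v2 b
      = ((√(2 * π * v1))⁻¹ * (√(2 * π * v2))⁻¹ * rexp (-(y - (m1 + m2)) ^ 2 / (2 * ((v1:ℝ) + v2))))
        * rexp (-((((v1:ℝ) + v2) / (2 * v1 * v2))
            * (b - (m2 + v2 * (y - (m1 + m2)) / ((v1:ℝ) + v2))) ^ 2)) := by
    intro b
    simp only [gaussianPDFReal]
    rw [mul_mul_mul_comm, ← Real.exp_add]
    conv_rhs => rw [mul_assoc, ← Real.exp_add]
    congr 1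
    have := hV1.ne'; have := hV2.ne'; have := hSpos.ne'
    rw [Real.exp_eq_exp]
    field_simp
    ring
  simp_rw [hfun]
  rw [integral_const_mul]
  rw [integral_sub_right_eq_self
      (fun b => rexp (-((((v1:ℝ) + v2) / (2 * v1 * v2)) * b ^ 2)))
      (m2 + (v2:ℝ) * (y - (m1 + m2)) / ((v1:ℝ) + v2))]
  simp_rw [neg_mul_eq_neg_mul (α := ℝ)]
  rw [integral_gaussian]
  have hconst : (√(2 * π * v1))⁻¹ * (√(2 * π * v2))⁻¹ * √(π / (((v1:ℝ) + v2) / (2 * v1 * v2)))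
      = (√(2 * π * ((v1:ℝ) + v2)))⁻¹ := by
    rw [← Real.sqrt_inv, ← Real.sqrt_inv, ← Real.sqrt_mul (by positivity),
      ← Real.sqrt_mul (by positivity), ← Real.sqrt_inv]
    congr 1
    field_simp
  have hR : gaussianPDFReal (m1 + m2) (v1 + v2) y
      = (√(2 * π * ((v1:ℝ) + v2)))⁻¹ * rexp (-(y - (m1 + m2)) ^ 2 / (2 * ((v1:ℝ) + v2))) := by
    simp only [gaussianPDFReal]
    push_cast
    rfl
  rw [hR, ← hconst]
  ring

lemma gaussianReal_conv (m1 m2 : ℝ) (v1 v2 : ℝ≥0) (h1 : v1 ≠ 0) (h2 : v2 ≠ 0) :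
    Measure.map (fun p : ℝ × ℝ => p.1 + p.2) ((gaussianReal m1 v1).prod (gaussianReal m2 v2))
      = gaussianReal (m1 + m2) (v1 + v2) := by
  have h12 : v1 + v2 ≠ 0 := fun h => h1 (add_eq_zero.mp h).1
  ext s hs
  rw [Measure.map_apply measurable_add hs, Measure.prod_apply (measurable_add hs)]
  have hstep1 : ∀ a : ℝ, gaussianReal m2 v2 (Prod.mk a ⁻¹' ((fun p : ℝ × ℝ => p.1 + p.2) ⁻¹' s))
      = ∫⁻ x in s, gaussianPDF m2 v2 (x - a) := by
    intro a
    show gaussianReal m2 v2 ((a + ·) ⁻¹' s) = _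
    rw [← Measure.map_apply (measurable_const_add a) hs, gaussianReal_map_const_add,
      gaussianReal_apply _ h2 s]
    congr 1 with x
    unfold gaussianPDF
    rw [gaussianPDFReal_sub]
  simp_rw [hstep1]
  rw [gaussianReal_of_var_ne_zero _ h1]
  have hmeas2 : Measurable fun (p : ℝ × ℝ) => gaussianPDF m2 v2 (p.2 - p.1) :=
    (measurable_gaussianPDF m2 v2).comp (measurable_snd.sub measurable_fst)
  rw [lintegral_withDensity_eq_lintegral_mul _ (measurable_gaussianPDF m1 v1)
    (Measurable.lintegral_prod_right' hmeas2)]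
  simp only [Pi.mul_apply]
  have hswap : ∫⁻ a, gaussianPDF m1 v1 a * ∫⁻ x in s, gaussianPDF m2 v2 (x - a)
      = ∫⁻ x in s, ∫⁻ a, gaussianPDF m1 v1 a * gaussianPDF m2 v2 (x - a) := by
    have hpull : ∀ a : ℝ, gaussianPDF m1 v1 a * ∫⁻ x in s, gaussianPDF m2 v2 (x - a)
        = ∫⁻ x in s, gaussianPDF m1 v1 a * gaussianPDF m2 v2 (x - a) := fun a =>
      (lintegral_const_mul _ ((measurable_gaussianPDF m2 v2).comp (measurable_id.sub_const a))).symm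
    simp_rw [hpull]
    exact lintegral_lintegral_swap
      (((measurable_gaussianPDF m1 v1).comp measurable_fst).mul hmeas2).aemeasurable
  rw [hswap]
  have hinner : ∀ x : ℝ, (∫⁻ a, gaussianPDF m1 v1 a * gaussianPDF m2 v2 (x - a))
      = gaussianPDF (m1 + m2) (v1 + v2) x := by
    intro x
    unfold gaussianPDF
    have hint : Integrable (fun a => gaussianPDFReal m1 v1 a * gaussianPDFReal m2 v2 (x - a)) := by
      apply Integrable.bdd_mul ((integrable_gaussianPDFReal m2 v2).comp_sub_left x)
        (stronglyMeasurable_gaussianPDFReal m1 v1).aestronglyMeasurable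
      refine ae_of_all _ fun (a : ℝ) => (?_ : ‖gaussianPDFReal m1 v1 a‖ ≤ (√(2 * π * v1))⁻¹)
      rw [Real.norm_eq_abs, abs_of_nonneg (gaussianPDFReal_nonneg _ _ _)]
      unfold gaussianPDFReal
      have hle : rexp (-(a - m1) ^ 2 / (2 * v1)) ≤ 1 := by
        apply Real.exp_le_one_iff.mpr
        exact div_nonpos_iff.mpr (Or.inr ⟨neg_nonpos.mpr (sq_nonneg _), by positivity⟩)
      exact mul_le_of_le_one_right (by positivity) hle
    have heqint : (∫ a, gaussianPDFReal m1 v1 a * gaussianPDFReal m2 v2 (x - a))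
        = gaussianPDFReal (m1 + m2) (v1 + v2) x := by
      rw [← gaussianPDFReal_conv m1 m2 v1 v2 h1 h2 x]
      rw [← integral_sub_left_eq_self (fun b => gaussianPDFReal m1 v1 (x - b)
        * gaussianPDFReal m2 v2 b) volume x]
      congr 1 with a
      simp
    rw [← heqint, ofReal_integral_eq_lintegral_ofReal hint
      (ae_of_all _ fun a => mul_nonneg (gaussianPDFReal_nonneg _ _ _) (gaussianPDFReal_nonneg _ _ _))]
    congr 1 with a
    rw [ENNReal.ofReal_mul (gaussianPDFReal_nonneg _ _ _)]
  simp_rw [hinner]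
  rw [← gaussianReal_apply _ h12 s]

lemma gaussianReal_map_neg (m : ℝ) (v : ℝ≥0) :
    (gaussianReal m v).map (fun y : ℝ => -y) = gaussianReal (-m) v := by
  have h1 : NNReal.mk ((-1:ℝ)^2) (sq_nonneg _) = 1 := by ext; norm_num
  rw [show (fun y : ℝ => -y) = ((-1 : ℝ) * ·) from funext fun y => (neg_eq_neg_one_mul y),
    gaussianReal_map_const_mul, h1, one_mul, neg_one_mul]

lemma prob_toReal_Ioi (μ : Measure ℝ) [IsProbabilityMeasure μ] (a : ℝ) :
    (μ (Ioi a)).toReal = 1 - (μ (Iic a)).toReal := by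
  have h := measure_add_measure_compl (μ := μ) (measurableSet_Iic (a := a))
  rw [compl_Iic, measure_univ] at h
  have h' := congrArg ENNReal.toReal h
  rw [ENNReal.toReal_add (measure_ne_top μ _) (measure_ne_top μ _), ENNReal.toReal_one] at h'
  linarith

lemma stdNormalCDF_neg (x : ℝ) : stdNormalCDF (-x) = 1 - stdNormalCDF x := by
  have hmap : (gaussianReal 0 1).map (fun y : ℝ => -y) = gaussianReal 0 1 := by
    rw [_root_.gaussianReal_map_neg, neg_zero]
  have h0 : (gaussianReal 0 1) {x} = 0 :=
    (gaussianReal_absolutelyContinuous 0 one_ne_zero) (measure_singleton x)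
  have h1 : (gaussianReal 0 1) (Iic (-x)) = (gaussianReal 0 1) (Ici x) := by
    conv_lhs => rw [← hmap]
    rw [Measure.map_apply measurable_neg measurableSet_Iic]
    congr 1
    ext y
    simp [neg_le]
  have h2 : (gaussianReal 0 1) (Ici x) = (gaussianReal 0 1) (Ioi x) := by
    apply le_antisymm
    · calc (gaussianReal 0 1) (Ici x) ≤ (gaussianReal 0 1) ({x} ∪ Ioi x) := by
            apply measure_mono
            intro y hy
            rcases eq_or_lt_of_le (mem_Ici.mp hy) with h | h
            · exact Or.inl (by simp [h.symm])
            · exact Or.inr h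
        _ ≤ (gaussianReal 0 1) {x} + (gaussianReal 0 1) (Ioi x) := measure_union_le _ _
        _ = (gaussianReal 0 1) (Ioi x) := by rw [h0, zero_add]
    · exact measure_mono Ioi_subset_Ici_self
  unfold stdNormalCDF
  rw [h1, h2, prob_toReal_Ioi]

lemma gaussianReal_eq_map (m : ℝ) (v : ℝ≥0) :
    gaussianReal m v = (gaussianReal 0 1).map (fun x => √v * x + m) := by
  have h1 : (gaussianReal 0 1).map ((√v : ℝ) * ·) = gaussianReal 0 v := by
    rw [gaussianReal_map_const_mul]
    have h2 : NNReal.mk ((√(v:ℝ))^2) (sq_nonneg _) * 1 = v := by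
      ext; push_cast [Real.sq_sqrt v.2]; simp
    rw [mul_zero, h2]
  rw [show (fun x : ℝ => √v * x + m) = (· + m) ∘ ((√v : ℝ) * ·) from rfl,
    ← Measure.map_map (measurable_add_const m) (measurable_const_mul _), h1,
    gaussianReal_map_add_const, zero_add]

lemma gaussianReal_toReal_Ioi_zero (m : ℝ) (v : ℝ≥0) (hv : v ≠ 0) :
    ((gaussianReal m v) (Ioi 0)).toReal = 1 - stdNormalCDF (-(m / √v)) := by
  have hvpos : (0:ℝ) < v := lt_of_le_of_ne v.2 (by simpa [eq_comm, NNReal.coe_eq_zero] using hv)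
  have hsq : (0:ℝ) < √v := Real.sqrt_pos.mpr hvpos
  rw [gaussianReal_eq_map m v,
    Measure.map_apply ((measurable_const_mul _).add_const m) measurableSet_Ioi]
  have hset : (fun x : ℝ => √v * x + m) ⁻¹' Ioi 0 = Ioi (-(m / √v)) := by
    ext x
    simp only [mem_preimage, mem_Ioi]
    rw [show -(m / √(v:ℝ)) = (-m) / √(v:ℝ) by ring, div_lt_iff₀ hsq]
    constructor <;> intro h <;> nlinarith
  rw [hset, prob_toReal_Ioi]
  rfl

lemma integral_max_gaussianReal (m : ℝ) (v : ℝ≥0) (hv : v ≠ 0) :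
    ∫ x, max x 0 ∂(gaussianReal m v)
      = m * (1 - stdNormalCDF (-(m / √v))) + √v * stdNormalPDF (m / √v) := by
  have hvpos : (0:ℝ) < v := lt_of_le_of_ne v.2 (by simpa [eq_comm, NNReal.coe_eq_zero] using hv)
  have hsq : (0:ℝ) < √v := Real.sqrt_pos.mpr hvpos
  -- step A : write as integral against the density
  have hA : ∫ x, max x 0 ∂(gaussianReal m v) = ∫ x, gaussianPDFReal m v x * max x 0 := by
    rw [gaussianReal_of_var_ne_zero _ hv]
    rw [show gaussianPDF m v = fun x => ((gaussianPDFReal m v x).toNNReal : ℝ≥0∞) from rfl]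
    rw [integral_withDensity_eq_integral_smul (measurable_gaussianPDFReal m v).real_toNNReal]
    congr 1 with x
    simp [NNReal.smul_def, Real.coe_toNNReal _ (gaussianPDFReal_nonneg m v x)]
  -- step B : restrict to Ioi 0
  have hB : ∫ x, gaussianPDFReal m v x * max x 0 = ∫ x in Ioi 0, gaussianPDFReal m v x * x := by
    rw [← integral_indicator measurableSet_Ioi]
    congr 1 with x
    by_cases hx : 0 < x
    · simp [indicator, hx, max_eq_left hx.le]
    · simp [indicator, hx, max_eq_right (not_lt.mp hx)]
  -- integrability facts
  have hint1 : Integrable (fun x => gaussianPDFReal m v x * (x - m)) := by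
    have h2 : Integrable (fun x : ℝ => x * rexp (-(2 * (v:ℝ))⁻¹ * x ^ 2)) :=
      integrable_mul_exp_neg_mul_sq (by positivity)
    have h3 := (h2.comp_sub_right m).const_mul (√(2 * π * v))⁻¹
    refine h3.congr (Filter.Eventually.of_forall fun x => ?_)
    simp only [gaussianPDFReal]
    rw [show -(x - m)^2 / (2 * (v:ℝ)) = -(2 * (v:ℝ))⁻¹ * (x - m)^2 by ring]
    ring
  have hint2 : Integrable (fun x => m * gaussianPDFReal m v x) :=
    (integrable_gaussianPDFReal m v).const_mul m
  -- step C : split the integral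
  have hC : ∫ x in Ioi 0, gaussianPDFReal m v x * x
      = (∫ x in Ioi 0, gaussianPDFReal m v x * (x - m))
        + ∫ x in Ioi 0, m * gaussianPDFReal m v x := by
    rw [← integral_add hint1.restrict hint2.restrict]
    congr 1 with x
    ring
  -- the FTC part
  have hD : ∫ x in Ioi 0, gaussianPDFReal m v x * (x - m)
      = (√(2 * π * v))⁻¹ * ((v:ℝ) * rexp (-m ^ 2 / (2 * v))) := by
    have hrw : ∀ x : ℝ, gaussianPDFReal m v x * (x - m)
        = (√(2 * π * v))⁻¹ * ((x - m) * rexp (-(x - m) ^ 2 / (2 * v))) := by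
      intro x; simp only [gaussianPDFReal]; ring
    simp_rw [hrw]
    rw [integral_const_mul]
    congr 1
    have hderiv : ∀ x ∈ Ici (0:ℝ),
        HasDerivAt (fun x => -(v:ℝ) * rexp (-(x - m) ^ 2 / (2 * v)))
          ((x - m) * rexp (-(x - m) ^ 2 / (2 * v))) x := by
      intro x _
      have h1 : HasDerivAt (fun x : ℝ => -(x - m) ^ 2 / (2 * v))
          (-(2 * (x - m)) / (2 * v)) x := by
        have := (((hasDerivAt_id x).sub_const m).pow 2).neg.div_const (2 * (v:ℝ))
        simpa using this
      have h2 := (h1.exp).const_mul (-(v:ℝ))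
      refine h2.congr_deriv ?_
      field_simp
    have hlim : Filter.Tendsto (fun x => -(v:ℝ) * rexp (-(x - m) ^ 2 / (2 * v)))
        Filter.atTop (nhds 0) := by
      have h1 : Filter.Tendsto (fun x : ℝ => -(x - m) ^ 2 / (2 * v)) Filter.atTop Filter.atBot := by
        apply Filter.Tendsto.atBot_div_const (by positivity)
        apply Filter.tendsto_neg_atTop_atBot.comp
        exact (Filter.tendsto_pow_atTop (two_ne_zero)).comp (Filter.tendsto_atTop_add_const_right _ _ Filter.tendsto_id)
      have h2 := (Real.tendsto_exp_atBot.comp h1).const_mul (-(v:ℝ))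
      simpa using h2
    have hIntOn : MeasureTheory.IntegrableOn
        (fun x => (x - m) * rexp (-(x - m) ^ 2 / (2 * v))) (Ioi 0) := by
      apply Integrable.integrableOn
      have h2 : Integrable (fun x : ℝ => x * rexp (-(2 * (v:ℝ))⁻¹ * x ^ 2)) :=
        integrable_mul_exp_neg_mul_sq (by positivity)
      refine (h2.comp_sub_right m).congr (Filter.Eventually.of_forall fun x => ?_)
      show (x - m) * rexp (-(2 * (v:ℝ))⁻¹ * (x - m) ^ 2) = _
      rw [show -(2 * (v:ℝ))⁻¹ * (x - m) ^ 2 = -(x - m) ^ 2 / (2 * (v:ℝ)) by ring]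
    rw [MeasureTheory.integral_Ioi_of_hasDerivAt_of_tendsto' hderiv hIntOn hlim]
    simp only [zero_sub, neg_neg]
    rw [show (-(m:ℝ)) ^ 2 = m ^ 2 by ring]
    ring
  -- the tail probability part
  have hE : ∫ x in Ioi 0, m * gaussianPDFReal m v x
      = m * (1 - stdNormalCDF (-(m / √v))) := by
    rw [integral_const_mul, ← gaussianReal_toReal_Ioi_zero m v hv,
      gaussianReal_apply_eq_integral m hv (Ioi 0), ENNReal.toReal_ofReal
        (integral_nonneg fun x => gaussianPDFReal_nonneg m v x)]
  -- the constant part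
  have hF : (√(2 * π * v))⁻¹ * ((v:ℝ) * rexp (-m ^ 2 / (2 * v)))
      = √v * stdNormalPDF (m / √v) := by
    unfold stdNormalPDF
    rw [show -(m / √(v:ℝ)) ^ 2 / 2 = -m ^ 2 / (2 * v) by
      rw [div_pow, Real.sq_sqrt hvpos.le]; ring]
    rw [Real.sqrt_mul (by positivity) (v:ℝ)]
    rw [show (v:ℝ) = √v * √v from (Real.mul_self_sqrt hvpos.le).symm]
    have h2π : (0:ℝ) < √(2 * π) := Real.sqrt_pos.mpr (by positivity)
    field_simp
    have hss : √(v:ℝ) * √(v:ℝ) = v := Real.mul_self_sqrt hvpos.le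
    rw [Real.sqrt_sq hsq.le]
  rw [hA, hB, hC, hD, hE, hF]
  ring


/-- explicit formulas for `C0` and `V0` in the Gaussian model
with `R0` determined by `VaR_α`. -/
theorem C0_V0_gaussian_formulas
    {Ω : Type*} [MeasurableSpace Ω] (P : Measure Ω) [IsProbabilityMeasure P]
    (α q η γ ν μ σ : ℝ) (hα : α ∈ Ioo (0:ℝ) (1/2))
    (hq : stdNormalCDF q = 1 - α) (hq0 : 0 < q) (hη : 0 < η)
    (hγ : 0 < γ) (hν : 0 < ν) (hμ : 0 < μ) (hσ : 0 < σ)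
    (X1 Z1 : Ω → ℝ) (hX1m : Measurable X1) (hZ1m : Measurable Z1)
    (hX : P.map X1 = gaussianReal γ (ν ^ 2).toNNReal)
    (hZ : P.map Z1 = gaussianReal μ (σ ^ 2).toNNReal)
    (hindep : IndepFun X1 Z1 P)
    (R0 : ℝ) (hR0 : 0 < R0)
    (heq : γ - R0 * μ + q * Real.sqrt (R0 ^ 2 * σ ^ 2 + ν ^ 2) = 0) :
    (∫ ω, max (R0 * Z1 ω - X1 ω) 0 ∂P) / (1 + η)
        = (R0 * μ - γ) * (1 + (stdNormalPDF q / q - α)) / (1 + η)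
    ∧ R0 - (∫ ω, max (R0 * Z1 ω - X1 ω) 0 ∂P) / (1 + η)
        = γ * (1 + (stdNormalPDF q / q - α)) / (1 + η)
          + R0 * (1 + η - μ * (1 + (stdNormalPDF q / q - α))) / (1 + η) := by
  have hVpos : (0:ℝ) < R0 ^ 2 * σ ^ 2 + ν ^ 2 := by positivity
  have hs : (0:ℝ) < Real.sqrt (R0 ^ 2 * σ ^ 2 + ν ^ 2) := Real.sqrt_pos.mpr hVpos
  have hM : R0 * μ - γ = q * Real.sqrt (R0 ^ 2 * σ ^ 2 + ν ^ 2) := by linarith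
  have hσ' : ((NNReal.mk (R0 ^ 2) (sq_nonneg R0)) * (σ ^ 2).toNNReal : ℝ≥0) ≠ 0 := by
    refine mul_ne_zero ?_ ?_
    · intro h
      have := congrArg (NNReal.toReal) h
      simp only [NNReal.coe_mk, NNReal.coe_zero] at this
      nlinarith
    · simp only [ne_eq, Real.toNNReal_eq_zero, not_le]
      positivity
  have hν' : (ν ^ 2).toNNReal ≠ 0 := by
    simp only [ne_eq, Real.toNNReal_eq_zero, not_le]
    positivity
  have hVne : ((R0 ^ 2 * σ ^ 2 + ν ^ 2).toNNReal) ≠ 0 := by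
    simp only [ne_eq, Real.toNNReal_eq_zero, not_le]
    positivity
  have hvZ : ((NNReal.mk (R0 ^ 2) (sq_nonneg R0)) * (σ ^ 2).toNNReal + (ν ^ 2).toNNReal : ℝ≥0)
      = (R0 ^ 2 * σ ^ 2 + ν ^ 2).toNNReal := by
    apply NNReal.coe_injective
    simp only [NNReal.coe_add, NNReal.coe_mul, NNReal.coe_mk,
      Real.coe_toNNReal _ (sq_nonneg σ), Real.coe_toNNReal _ (sq_nonneg ν),
      Real.coe_toNNReal _ hVpos.le]
  have hAmap : P.map (fun ω => R0 * Z1 ω)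
      = gaussianReal (R0 * μ) (NNReal.mk (R0 ^ 2) (sq_nonneg R0) * (σ ^ 2).toNNReal) := by
    rw [show (fun ω => R0 * Z1 ω) = ((R0 * ·) ∘ Z1) from rfl,
      ← Measure.map_map (measurable_const_mul R0) hZ1m, hZ, gaussianReal_map_const_mul]
  have hBmap : P.map (fun ω => -X1 ω) = gaussianReal (-γ) (ν ^ 2).toNNReal := by
    rw [show (fun ω => -X1 ω) = ((fun y : ℝ => -y) ∘ X1) from rfl,
      ← Measure.map_map measurable_neg hX1m, hX, _root_.gaussianReal_map_neg]
  have hInd : IndepFun (fun ω => R0 * Z1 ω) (fun ω => -X1 ω) P :=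
    hindep.symm.comp (measurable_const_mul R0) measurable_neg
  have hpair : P.map (fun ω => (R0 * Z1 ω, -X1 ω))
      = (P.map fun ω => R0 * Z1 ω).prod (P.map fun ω => -X1 ω) :=
    (indepFun_iff_map_prod_eq_prod_map_map (hZ1m.const_mul R0).aemeasurable
      hX1m.neg.aemeasurable).mp hInd
  have hmeasf : Measurable fun ω => R0 * Z1 ω - X1 ω := (hZ1m.const_mul R0).sub hX1m
  have hlaw : P.map (fun ω => R0 * Z1 ω - X1 ω)
      = gaussianReal (R0 * μ - γ) ((R0 ^ 2 * σ ^ 2 + ν ^ 2).toNNReal) := by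
    have hcomp : (fun ω => R0 * Z1 ω - X1 ω)
        = (fun p : ℝ × ℝ => p.1 + p.2) ∘ (fun ω => (R0 * Z1 ω, -X1 ω)) := by
      funext ω; simp [sub_eq_add_neg]
    rw [hcomp, ← Measure.map_map measurable_add
      ((hZ1m.const_mul R0).prodMk (show Measurable fun ω => -X1 ω from hX1m.neg)), hpair, hAmap, hBmap,
      gaussianReal_conv _ _ _ _ hσ' hν', hvZ, show R0 * μ + -γ = R0 * μ - γ from by ring]
  have hcoe : (((R0 ^ 2 * σ ^ 2 + ν ^ 2).toNNReal : ℝ≥0) : ℝ) = R0 ^ 2 * σ ^ 2 + ν ^ 2 :=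
    Real.coe_toNNReal _ hVpos.le
  have hdiv : (R0 * μ - γ) / Real.sqrt (R0 ^ 2 * σ ^ 2 + ν ^ 2) = q := by
    rw [hM, mul_div_assoc, div_self hs.ne', mul_one]
  have hval : ∫ ω, max (R0 * Z1 ω - X1 ω) 0 ∂P
      = (R0 * μ - γ) * (1 + (stdNormalPDF q / q - α)) := by
    have h1 : ∫ ω, max (R0 * Z1 ω - X1 ω) 0 ∂P
        = ∫ x, max x 0 ∂(gaussianReal (R0 * μ - γ) ((R0 ^ 2 * σ ^ 2 + ν ^ 2).toNNReal)) := by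
      rw [← hlaw]
      exact (integral_map hmeasf.aemeasurable
        (Continuous.aestronglyMeasurable (continuous_id.max continuous_const))).symm
    rw [h1, integral_max_gaussianReal _ _ hVne, hcoe, hdiv, stdNormalCDF_neg, hq]
    have hseq : Real.sqrt (R0 ^ 2 * σ ^ 2 + ν ^ 2) = (R0 * μ - γ) / q := by
      rw [eq_div_iff hq0.ne']
      linarith [hM]
    rw [hseq]
    field_simp
    ring
  have h1η : (1:ℝ) + η ≠ 0 := by positivity
  constructor
  · rw [hval]
  · rw [hval]
    field_simp
    ring
end

section
/- Let α ∈ (0,1/2), q = Φ^{-1}(1−α) > 0, η > 0, and let X1 ~ N(γ, ν²) and S1 ~ N(μ, σ²) be independent with γ, σ, ν > 0 and μ > σ·q. For w ∈ [0,1] set μ_w = wμ + 1 − w and σ_w = wσ, let R0^w be the unique positive solution of γ − r·μ_w + q·√(r²σ_w² + ν²) = 0 (i.e. of VaR_α(R0^w(wS1+1−w) − X1) = 0), and set C0^w = E[(R0^w(wS1+1−w) − X1)^+]/(1+η). Then C0^0 < C0^w for all w ∈ (0,1]. -/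
open MeasureTheory ProbabilityTheory Real Set

open scoped ENNReal NNReal

section Auxiliary

/-- Real-valued Gaussian pdf with real variance parameter. -/
noncomputable def gpdf (m v x : ℝ) : ℝ :=
  (Real.sqrt (2 * π * v))⁻¹ * Real.exp (-(x - m)^2 / (2 * v))

lemma gpdf_nonneg (m v x : ℝ) : 0 ≤ gpdf m v x := by
  unfold gpdf; positivity

lemma measurable_gpdf (m v : ℝ) : Measurable (gpdf m v) := by
  unfold gpdf; fun_prop

lemma gpdf_eq (m : ℝ) {v : ℝ} (hv : 0 ≤ v) (x : ℝ) :
    gaussianPDFReal m v.toNNReal x = gpdf m v x := by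
  rw [gaussianPDFReal_def, gpdf, Real.coe_toNNReal v hv]

lemma gpdf_factor {v1 v2 : ℝ} (h1 : 0 < v1) (h2 : 0 < v2) (m1 m2 t x : ℝ) :
    gpdf m1 v1 x * gpdf m2 v2 (t + x)
      = gpdf (m2 - m1) (v1 + v2) t
        * gpdf ((v2 * m1 + v1 * (m2 - t)) / (v1 + v2)) (v1 * v2 / (v1 + v2)) x := by
  have h12 : 0 < v1 + v2 := by linarith
  unfold gpdf
  rw [mul_mul_mul_comm, ← Real.exp_add, mul_mul_mul_comm, ← Real.exp_add]
  congr 1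
  · rw [← mul_inv, ← mul_inv, ← Real.sqrt_mul (by positivity), ← Real.sqrt_mul (by positivity)]
    congr 1
    field_simp
  · congr 1
    field_simp
    ring

lemma lintegral_gpdf_one {m v : ℝ} (hv : 0 < v) :
    ∫⁻ x, ENNReal.ofReal (gpdf m v x) = 1 := by
  have hv' : v.toNNReal ≠ 0 := by
    simp [Real.toNNReal_eq_zero, not_le, hv]
  have := lintegral_gaussianPDF_eq_one m hv'
  simp_rw [gaussianPDF_def] at this
  simp_rw [← gpdf_eq m hv.le]
  exact this

lemma conv_lintegral {v1 v2 : ℝ} (h1 : 0 < v1) (h2 : 0 < v2) (m1 m2 t : ℝ) :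
    ∫⁻ x, ENNReal.ofReal (gpdf m1 v1 x * gpdf m2 v2 (t + x))
      = ENNReal.ofReal (gpdf (m2 - m1) (v1 + v2) t) := by
  simp_rw [gpdf_factor h1 h2, ENNReal.ofReal_mul (gpdf_nonneg _ _ _)]
  rw [lintegral_const_mul _ ((measurable_gpdf _ _).ennreal_ofReal),
    lintegral_gpdf_one (by positivity), mul_one]

lemma gaussianPDF_eq_gpdf (m : ℝ) {v : ℝ} (hv : 0 ≤ v) (x : ℝ) :
    gaussianPDF m v.toNNReal x = ENNReal.ofReal (gpdf m v x) := by
  simp only [gaussianPDF_def]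
  rw [gpdf_eq m hv]

lemma lintegral_sub_indep
    {Ω : Type*} [MeasurableSpace Ω] (P : Measure Ω) [IsProbabilityMeasure P]
    {X U : Ω → ℝ} (hXm : Measurable X) (hUm : Measurable U)
    {m1 m2 v1 v2 : ℝ} (h1 : 0 < v1) (h2 : 0 < v2)
    (hXlaw : P.map X = gaussianReal m1 v1.toNNReal)
    (hUlaw : P.map U = gaussianReal m2 v2.toNNReal)
    (hind : IndepFun X U P)
    {g : ℝ → ℝ≥0∞} (hg : Measurable g) :
    ∫⁻ ω, g (U ω - X ω) ∂P
      = ∫⁻ t, g t ∂(gaussianReal (m2 - m1) (v1 + v2).toNNReal) := by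
  have hv1 : v1.toNNReal ≠ 0 := by simp [Real.toNNReal_eq_zero, not_le, h1]
  have hv2 : v2.toNNReal ≠ 0 := by simp [Real.toNNReal_eq_zero, not_le, h2]
  have hv12 : (v1 + v2).toNNReal ≠ 0 := by
    simp [Real.toNNReal_eq_zero, not_le]; linarith
  have hpair : P.map (fun ω => (X ω, U ω)) = (P.map X).prod (P.map U) :=
    (indepFun_iff_map_prod_eq_prod_map_map hXm.aemeasurable hUm.aemeasurable).mp hind
  have hgsub : Measurable fun p : ℝ × ℝ => g (p.2 - p.1) :=
    hg.comp (measurable_snd.sub measurable_fst)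
  calc ∫⁻ ω, g (U ω - X ω) ∂P
      = ∫⁻ p : ℝ × ℝ, g (p.2 - p.1) ∂(P.map (fun ω => (X ω, U ω))) := by
        rw [lintegral_map hgsub (hXm.prodMk hUm)]
    _ = ∫⁻ x, ∫⁻ u, g (u - x) ∂(gaussianReal m2 v2.toNNReal)
          ∂(gaussianReal m1 v1.toNNReal) := by
        rw [hpair, hXlaw, hUlaw, lintegral_prod _ hgsub.aemeasurable]
    _ = ∫⁻ x, ∫⁻ u, gaussianPDF m2 v2.toNNReal u * g (u - x) ∂volume
          ∂(gaussianReal m1 v1.toNNReal) := by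
        congr 1; ext x
        have h2' : Measurable fun u : ℝ => g (u - x) := hg.comp (measurable_id.sub_const x)
        rw [gaussianReal_of_var_ne_zero m2 hv2,
          lintegral_withDensity_eq_lintegral_mul _ (measurable_gaussianPDF m2 _) h2']
        simp only [Pi.mul_apply]
    _ = ∫⁻ x, ∫⁻ t, gaussianPDF m2 v2.toNNReal (t + x) * g t ∂volume
          ∂(gaussianReal m1 v1.toNNReal) := by
        congr 1; ext x
        rw [← lintegral_add_right_eq_self
          (fun u => gaussianPDF m2 v2.toNNReal u * g (u - x)) x]
        simp
    _ = ∫⁻ x, gaussianPDF m1 v1.toNNReal x *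
          ∫⁻ t, gaussianPDF m2 v2.toNNReal (t + x) * g t ∂volume ∂volume := by
        have hm : Measurable fun x : ℝ =>
            ∫⁻ t, gaussianPDF m2 v2.toNNReal (t + x) * g t ∂volume :=
          Measurable.lintegral_prod_right
            ((((measurable_gaussianPDF m2 _).comp (measurable_snd.add measurable_fst)).mul
              (hg.comp measurable_snd)) :
              Measurable (Function.uncurry fun x t => gaussianPDF m2 v2.toNNReal (t + x) * g t))
        rw [gaussianReal_of_var_ne_zero m1 hv1,
          lintegral_withDensity_eq_lintegral_mul _ (measurable_gaussianPDF m1 _) hm]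
        simp only [Pi.mul_apply]
    _ = ∫⁻ x, ∫⁻ t, gaussianPDF m1 v1.toNNReal x *
          (gaussianPDF m2 v2.toNNReal (t + x) * g t) ∂volume ∂volume := by
        congr 1; ext x
        exact (lintegral_const_mul _
          ((((measurable_gaussianPDF m2 _).comp (measurable_id.add_const x)).mul hg) :
            Measurable fun t : ℝ => gaussianPDF m2 v2.toNNReal (t + x) * g t)).symm
    _ = ∫⁻ t, ∫⁻ x, gaussianPDF m1 v1.toNNReal x *
          (gaussianPDF m2 v2.toNNReal (t + x) * g t) ∂volume ∂volume := by
        apply lintegral_lintegral_swap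
        apply Measurable.aemeasurable
        exact ((measurable_gaussianPDF m1 _).comp measurable_fst).mul
          (((measurable_gaussianPDF m2 _).comp (measurable_snd.add measurable_fst)).mul
            (hg.comp measurable_snd))
    _ = ∫⁻ t, g t * ∫⁻ x, ENNReal.ofReal (gpdf m1 v1 x * gpdf m2 v2 (t + x)) ∂volume
          ∂volume := by
        congr 1; ext t
        have hmeas : Measurable fun x => ENNReal.ofReal (gpdf m1 v1 x * gpdf m2 v2 (t + x)) :=
          (((measurable_gpdf m1 v1).mul
            ((measurable_gpdf m2 v2).comp (measurable_const.add measurable_id))) :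
              Measurable fun x : ℝ => gpdf m1 v1 x * gpdf m2 v2 (t + x)).ennreal_ofReal
        rw [← lintegral_const_mul (g t) hmeas]
        congr 1; ext x
        rw [ENNReal.ofReal_mul (gpdf_nonneg _ _ _), ← gaussianPDF_eq_gpdf m1 h1.le,
          ← gaussianPDF_eq_gpdf m2 h2.le]
        ring
    _ = ∫⁻ t, gaussianPDF (m2 - m1) (v1 + v2).toNNReal t * g t ∂volume := by
        congr 1; ext t
        rw [conv_lintegral h1 h2, gaussianPDF_eq_gpdf _ (by linarith : (0:ℝ) ≤ v1 + v2)]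
        ring
    _ = ∫⁻ t, g t ∂(gaussianReal (m2 - m1) (v1 + v2).toNNReal) := by
        rw [gaussianReal_of_var_ne_zero _ hv12,
          lintegral_withDensity_eq_lintegral_mul _ (measurable_gaussianPDF _ _) hg]
        simp only [Pi.mul_apply]

noncomputable def Kq (q : ℝ) : ℝ≥0∞ :=
  ∫⁻ z, ENNReal.ofReal (max (z + q) 0) ∂(gaussianReal 0 1)

lemma gaussianReal_set_pos (m : ℝ) {v : ℝ≥0} (hv : v ≠ 0) {s : Set ℝ}
    (hs : MeasurableSet s) (h : 0 < volume s) : 0 < gaussianReal m v s := by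
  rw [gaussianReal_of_var_ne_zero m hv, withDensity_apply _ hs]
  rw [lintegral_pos_iff_support (measurable_gaussianPDF m v)]
  have hsup : Function.support (gaussianPDF m v) = univ := by
    ext x
    simp only [Function.mem_support, mem_univ, iff_true, ne_eq, gaussianPDF_def,
      ENNReal.ofReal_eq_zero, not_le]
    exact gaussianPDFReal_pos m v x hv
  rw [hsup, Measure.restrict_apply MeasurableSet.univ, univ_inter]
  exact h

lemma Kq_pos {q : ℝ} (hq : 0 < q) : 0 < Kq q := by
  have hmeas : Measurable fun z : ℝ => ENNReal.ofReal (max (z + q) 0) :=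
    ((measurable_id.add_const q).max measurable_const).ennreal_ofReal
  rw [Kq, lintegral_pos_iff_support hmeas]
  have hsub : Ioi (0:ℝ) ⊆ Function.support fun z : ℝ => ENNReal.ofReal (max (z + q) 0) := by
    intro z hz
    have hz' : (0:ℝ) < z + q := by have := mem_Ioi.mp hz; linarith
    simp only [Function.mem_support, ne_eq, ENNReal.ofReal_eq_zero, not_le]
    rw [max_eq_left hz'.le]
    exact hz'
  exact lt_of_lt_of_le (gaussianReal_set_pos 0 one_ne_zero measurableSet_Ioi
    (by simp [Real.volume_Ioi])) (measure_mono hsub)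

lemma Kq_lt_top (q : ℝ) : Kq q < ⊤ := by
  have h0 : Integrable (fun x : ℝ => x * Real.exp (-(1/2:ℝ) * x^2)) volume :=
    integrable_mul_exp_neg_mul_sq (by norm_num)
  have h1 : Integrable (fun x : ℝ => |x| * Real.exp (-(1/2:ℝ) * x^2)) volume := by
    refine h0.abs.congr (Filter.Eventually.of_forall fun x => ?_)
    show |x * Real.exp (-(1/2:ℝ) * x^2)| = |x| * Real.exp (-(1/2:ℝ) * x^2)
    rw [abs_mul, abs_of_pos (Real.exp_pos _)]
  have key : Integrable (fun z : ℝ => |z| * gaussianPDFReal 0 1 z) volume := by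
    refine (h1.const_mul (Real.sqrt (2*π))⁻¹).congr
      (Filter.Eventually.of_forall fun z => ?_)
    rw [gaussianPDFReal_def]
    simp only [NNReal.coe_one, sub_zero, mul_one]
    ring_nf
  have habs : Integrable (fun z : ℝ => |z|) (gaussianReal 0 1) := by
    rw [gaussianReal_of_var_ne_zero 0 one_ne_zero]
    rw [integrable_withDensity_iff (measurable_gaussianPDF 0 1)
      (Filter.Eventually.of_forall fun x => ENNReal.ofReal_lt_top)]
    refine key.congr (Filter.Eventually.of_forall fun z => ?_)
    simp only [gaussianPDF_def]
    rw [ENNReal.toReal_ofReal (gaussianPDFReal_nonneg 0 1 z)]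
  have hint : Integrable (fun z : ℝ => |z| + |q|) (gaussianReal 0 1) :=
    habs.add (integrable_const _)
  calc Kq q ≤ ∫⁻ z, ENNReal.ofReal (|z| + |q|) ∂(gaussianReal 0 1) := by
        refine lintegral_mono fun z => ENNReal.ofReal_le_ofReal ?_
        exact max_le (add_le_add (le_abs_self z) (le_abs_self q)) (by positivity)
    _ < ⊤ := hint.lintegral_lt_top

lemma map_affine {Ω : Type*} [MeasurableSpace Ω] (P : Measure Ω) {S : Ω → ℝ}
    (hS : Measurable S) {m : ℝ} {v : ℝ≥0}
    (hlaw : P.map S = gaussianReal m v) (a b : ℝ) :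
    P.map (fun ω => a * S ω + b)
      = gaussianReal (a * m + b) (NNReal.mk (a^2) (sq_nonneg _) * v) := by
  have h1 : (fun ω => a * S ω + b) = (· + b) ∘ ((a * ·) ∘ S) := rfl
  rw [h1, ← Measure.map_map (measurable_add_const b) ((measurable_const_mul a).comp hS),
    ← Measure.map_map (measurable_const_mul a) hS, hlaw,
    gaussianReal_map_const_mul, gaussianReal_map_add_const]

lemma lintegral_max_gaussian {v : ℝ} (hv : 0 < v) (q : ℝ) :
    ∫⁻ t, ENNReal.ofReal (max t 0) ∂(gaussianReal (q * Real.sqrt v) v.toNNReal)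
      = ENNReal.ofReal (Real.sqrt v) * Kq q := by
  have hsv : 0 < Real.sqrt v := Real.sqrt_pos.mpr hv
  have hvar : NNReal.mk ((Real.sqrt v)^2) (sq_nonneg _) * 1 = v.toNNReal := by
    ext
    simp [Real.sq_sqrt hv.le, Real.coe_toNNReal v hv.le]
  have hmap : gaussianReal (q * Real.sqrt v) v.toNNReal
      = ((gaussianReal 0 1).map (Real.sqrt v * ·)).map (· + q * Real.sqrt v) := by
    rw [gaussianReal_map_const_mul, hvar, mul_zero, gaussianReal_map_add_const, zero_add]
  have hm1 : Measurable fun t : ℝ => ENNReal.ofReal (max t 0) :=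
    (measurable_id.max measurable_const).ennreal_ofReal
  have hm2 : Measurable fun t : ℝ => ENNReal.ofReal (max (t + q * Real.sqrt v) 0) :=
    ((measurable_id.add_const _).max measurable_const).ennreal_ofReal
  rw [hmap, lintegral_map hm1 (measurable_add_const _),
    lintegral_map hm2 (measurable_const_mul _)]
  have hpt : ∀ z : ℝ, ENNReal.ofReal (max (Real.sqrt v * z + q * Real.sqrt v) 0)
      = ENNReal.ofReal (Real.sqrt v) * ENNReal.ofReal (max (z + q) 0) := by
    intro z
    rw [← ENNReal.ofReal_mul hsv.le, mul_max_of_nonneg _ _ hsv.le, mul_zero, mul_add,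
      mul_comm (Real.sqrt v) q]
  simp_rw [hpt]
  have hm3 : Measurable fun z : ℝ => ENNReal.ofReal (max (z + q) 0) :=
    ((measurable_id.add_const q).max measurable_const).ennreal_ofReal
  rw [lintegral_const_mul _ hm3, Kq]

end Auxiliary

/-- the shareholder value `C0^w` with risky investment always
exceeds the risk-less one `C0^0`, for every `w ∈ (0,1]`. -/
theorem C0_riskless_lt_C0_risky
    {Ω : Type*} [MeasurableSpace Ω] (P : Measure Ω) [IsProbabilityMeasure P]
    (α q η γ ν μ σ : ℝ) (hα : α ∈ Ioo (0:ℝ) (1/2))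
    (hq : stdNormalCDF q = 1 - α) (hq0 : 0 < q) (hη : 0 < η)
    (hγ : 0 < γ) (hν : 0 < ν) (hσ : 0 < σ) (hμσ : σ * q < μ)
    (X1 S1 : Ω → ℝ) (hX1m : Measurable X1) (hS1m : Measurable S1)
    (hX : P.map X1 = gaussianReal γ (ν ^ 2).toNNReal)
    (hS : P.map S1 = gaussianReal μ (σ ^ 2).toNNReal)
    (hindep : IndepFun X1 S1 P)
    (R : ℝ → ℝ)
    (hR : ∀ w ∈ Icc (0:ℝ) 1, 0 < R w ∧
        γ - R w * (w * μ + 1 - w) + q * Real.sqrt ((R w)^2 * (w * σ)^2 + ν^2) = 0)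
    (hRuniq : ∀ w ∈ Icc (0:ℝ) 1, ∀ r : ℝ, 0 < r →
        γ - r * (w * μ + 1 - w) + q * Real.sqrt (r^2 * (w * σ)^2 + ν^2) = 0 → r = R w) :
    ∀ w ∈ Ioc (0:ℝ) 1,
      (∫ ω, max (R 0 - X1 ω) 0 ∂P) / (1 + η)
        < (∫ ω, max (R w * (w * S1 ω + 1 - w) - X1 ω) 0 ∂P) / (1 + η) := by
  intro w hw
  obtain ⟨hw0, hw1⟩ := hw
  have hRw := hR w ⟨hw0.le, hw1⟩
  have hR0 := hR 0 ⟨le_refl 0, zero_le_one⟩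
  set a : ℝ := R w * w with ha_def
  set b : ℝ := R w * (1 - w) with hb_def
  have ha : 0 < a := mul_pos hRw.1 hw0
  -- mean identity at w = 0
  have hR0eq : R 0 - γ = q * ν := by
    have h := hR0.2
    rw [show (R 0)^2 * ((0:ℝ) * σ)^2 + ν^2 = ν^2 by ring, Real.sqrt_sq hν.le,
      show (0:ℝ) * μ + 1 - 0 = 1 by ring, mul_one] at h
    linarith
  -- mean identity at w
  have hmw : a * μ + b - γ = q * Real.sqrt (ν^2 + a^2 * σ^2) := by
    have h := hRw.2
    rw [show (R w)^2 * (w * σ)^2 + ν^2 = ν^2 + a^2 * σ^2 by rw [ha_def]; ring] at h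
    have hab : a * μ + b = R w * (w * μ + 1 - w) := by rw [ha_def, hb_def]; ring
    linarith
  -- law of the riskless payoff
  have hL0 : P.map (fun ω => R 0 - X1 ω)
      = gaussianReal (q * Real.sqrt (ν^2)) (ν^2).toNNReal := by
    have h1 : (fun ω => R 0 - X1 ω) = fun ω => (-1 : ℝ) * X1 ω + R 0 := by
      funext ω; ring
    rw [h1, map_affine P hX1m hX (-1) (R 0)]
    congr 1
    · rw [Real.sqrt_sq hν.le]; linarith
    · ext; simp
  -- the risky investment
  set U : Ω → ℝ := fun ω => a * S1 ω + b with hU_def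
  have hUm : Measurable U := (hS1m.const_mul a).add_const b
  have hUlaw : P.map U = gaussianReal (a * μ + b) (a^2 * σ^2).toNNReal := by
    rw [hU_def, map_affine P hS1m hS a b]
    congr 1
    ext
    push_cast
    rw [Real.coe_toNNReal _ (sq_nonneg σ),
      Real.coe_toNNReal _ (by positivity : (0:ℝ) ≤ a^2 * σ^2)]
  have hind : IndepFun X1 U P :=
    hindep.comp measurable_id ((measurable_const_mul a).add_const b)
  have hg : Measurable fun t : ℝ => ENNReal.ofReal (max t 0) :=
    (measurable_id.max measurable_const).ennreal_ofReal
  -- lintegral computations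
  have keyR : ∫⁻ ω, ENNReal.ofReal (max (U ω - X1 ω) 0) ∂P
      = ENNReal.ofReal (Real.sqrt (ν^2 + a^2 * σ^2)) * Kq q := by
    have h := lintegral_sub_indep P hX1m hUm (by positivity : (0:ℝ) < ν^2)
      (by positivity : (0:ℝ) < a^2 * σ^2) hX hUlaw hind hg
    rw [h, hmw, lintegral_max_gaussian (by positivity) q]
  have keyL : ∫⁻ ω, ENNReal.ofReal (max (R 0 - X1 ω) 0) ∂P
      = ENNReal.ofReal (Real.sqrt (ν^2)) * Kq q := by
    rw [← lintegral_map hg (show Measurable fun ω => R 0 - X1 ω from measurable_const.sub hX1m), hL0,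
      lintegral_max_gaussian (by positivity) q]
  -- integrand identification
  have hEq : ∀ ω, R w * (w * S1 ω + 1 - w) - X1 ω = U ω - X1 ω := by
    intro ω
    simp only [hU_def, ha_def, hb_def]
    ring
  simp only [hEq]
  -- convert Bochner integrals to lintegrals
  have hInt1 : ∫ ω, max (R 0 - X1 ω) 0 ∂P
      = (∫⁻ ω, ENNReal.ofReal (max (R 0 - X1 ω) 0) ∂P).toReal :=
    integral_eq_lintegral_of_nonneg_ae (ae_of_all _ fun ω => le_max_right _ _)
      ((measurable_const.sub hX1m).max measurable_const).aestronglyMeasurable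
  have hInt2 : ∫ ω, max (U ω - X1 ω) 0 ∂P
      = (∫⁻ ω, ENNReal.ofReal (max (U ω - X1 ω) 0) ∂P).toReal :=
    integral_eq_lintegral_of_nonneg_ae (ae_of_all _ fun ω => le_max_right _ _)
      ((hUm.sub hX1m).max measurable_const).aestronglyMeasurable
  rw [hInt1, hInt2, keyL, keyR, ENNReal.toReal_mul, ENNReal.toReal_mul,
    ENNReal.toReal_ofReal (Real.sqrt_nonneg _), ENNReal.toReal_ofReal (Real.sqrt_nonneg _)]
  have hk : 0 < (Kq q).toReal :=
    ENNReal.toReal_pos (Kq_pos hq0).ne' (Kq_lt_top q).ne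
  have hlt : Real.sqrt (ν^2) < Real.sqrt (ν^2 + a^2 * σ^2) :=
    Real.sqrt_lt_sqrt (sq_nonneg ν)
      (by nlinarith [mul_pos (mul_pos ha ha) (mul_pos hσ hσ)])
  have h1η : 0 < 1 + η := by linarith
  have hmul : Real.sqrt (ν^2) * (Kq q).toReal
      < Real.sqrt (ν^2 + a^2 * σ^2) * (Kq q).toReal :=
    mul_lt_mul_of_pos_right hlt hk
  exact div_lt_div_of_pos_right hmul h1η
end

section
/- Let α ∈ (0,1), set ψ = φ(Φ^{-1}(1−α))/α, and let X1 ~ N(γ, ν²) and Z1 ~ N(μ, σ²) be independent with μ, γ, σ, ν > 0. (i) If μ > σ·ψ, then R0 = (μγ + ψ·√(γ²σ² + μ²ν² − σ²ν²ψ²)) / (μ² − σ²ψ²) is the unique positive solution of ES_α(R0·Z1 − X1) = 0. (ii) If μ ≤ σ·ψ, then ES_α(R0·Z1 − X1) = 0 has no positive solution R0. -/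
open MeasureTheory ProbabilityTheory Real Set

open Filter
open scoped NNReal ENNReal Topology

noncomputable def Qgauss (p : ℝ) : ℝ := sInf {x : ℝ | p ≤ stdNormalCDF x}

lemma conv_pdf (m1 m2 : ℝ) (a b : ℝ≥0) (ha : a ≠ 0) (hb : b ≠ 0) (u : ℝ) :
    ∫ x, gaussianPDFReal m1 a x * gaussianPDFReal m2 b (u - x)
      = gaussianPDFReal (m1 + m2) (a + b) u := by
  have hA : 0 < (a : ℝ) := by exact_mod_cast pos_iff_ne_zero.mpr ha
  have hB : 0 < (b : ℝ) := by exact_mod_cast pos_iff_ne_zero.mpr hb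
  set A := (a : ℝ)
  set B := (b : ℝ)
  have hAB : 0 < A + B := by linarith
  set k : ℝ := (A + B) / (2 * A * B) with hk
  have hkpos : 0 < k := by positivity
  set x0 : ℝ := (B * m1 + A * (u - m2)) / (A + B) with hx0
  have hsq : (0:ℝ) < Real.sqrt (π / k) := Real.sqrt_pos.mpr (by positivity)
  have key : ∀ x, gaussianPDFReal m1 a x * gaussianPDFReal m2 b (u - x)
      = (gaussianPDFReal (m1 + m2) (a + b) u * (Real.sqrt (π / k))⁻¹)
        * rexp (-k * (x - x0) ^ 2) := by
    intro x
    simp only [gaussianPDFReal, NNReal.coe_add]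
    rw [show ((a:ℝ)) = A from rfl, show ((b:ℝ)) = B from rfl]
    have c1 : (Real.sqrt (2*π*A))⁻¹ * (Real.sqrt (2*π*B))⁻¹
        = (Real.sqrt (2*π*(A+B)))⁻¹ * (Real.sqrt (π/k))⁻¹ := by
      rw [← mul_inv, ← mul_inv, ← Real.sqrt_mul (by positivity), ← Real.sqrt_mul (by positivity)]
      congr 2
      rw [hk]
      have hA0 : A ≠ 0 := ne_of_gt hA
      have hB0 : B ≠ 0 := ne_of_gt hB
      have hAB0 : A + B ≠ 0 := ne_of_gt hAB
      field_simp
    have e1 : -(x - m1)^2/(2*A) + -(u - x - m2)^2/(2*B)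
        = -(u - (m1+m2))^2/(2*(A+B)) + -k*(x - x0)^2 := by
      rw [hk, hx0]
      have hA0 : A ≠ 0 := ne_of_gt hA
      have hB0 : B ≠ 0 := ne_of_gt hB
      have hAB0 : A + B ≠ 0 := ne_of_gt hAB
      field_simp
      ring
    calc (√(2 * π * A))⁻¹ * rexp (-(x - m1) ^ 2 / (2 * A))
        * ((√(2 * π * B))⁻¹ * rexp (-(u - x - m2) ^ 2 / (2 * B)))
        = ((Real.sqrt (2*π*A))⁻¹ * (Real.sqrt (2*π*B))⁻¹)
          * rexp (-(x - m1)^2/(2*A) + -(u - x - m2)^2/(2*B)) := by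
          rw [Real.exp_add]; ring
      _ = _ := by rw [c1, e1, Real.exp_add]; ring
  rw [integral_congr_ae (ae_of_all _ key)]
  rw [integral_const_mul]
  have : ∫ x, rexp (-k * (x - x0) ^ 2) = Real.sqrt (π / k) := by
    rw [integral_sub_right_eq_self (fun x => rexp (-k * x ^ 2)) x0]
    exact integral_gaussian k
  rw [this]
  field_simp

lemma gauss_map_add {Ω : Type*} [MeasurableSpace Ω] (P : Measure Ω) [IsProbabilityMeasure P]
    {X Y : Ω → ℝ} (hXm : Measurable X) (hYm : Measurable Y) (hindep : IndepFun X Y P)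
    {m1 m2 : ℝ} {v1 v2 : ℝ≥0} (hv1 : v1 ≠ 0) (hv2 : v2 ≠ 0)
    (hX : P.map X = gaussianReal m1 v1) (hY : P.map Y = gaussianReal m2 v2) :
    P.map (fun ω => X ω + Y ω) = gaussianReal (m1 + m2) (v1 + v2) := by
  have hmeas : Measurable fun ω => X ω + Y ω := hXm.add hYm
  have : IsProbabilityMeasure (P.map (fun ω => X ω + Y ω)) :=
    Measure.isProbabilityMeasure_map hmeas.aemeasurable
  refine Measure.ext_of_Iic _ _ (fun t => ?_)
  rw [Measure.map_apply hmeas measurableSet_Iic]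
  have hset : MeasurableSet {p : ℝ × ℝ | p.1 + p.2 ≤ t} :=
    measurableSet_le (measurable_fst.add measurable_snd) measurable_const
  have hpre : (fun ω => X ω + Y ω) ⁻¹' (Iic t)
      = (fun ω => (X ω, Y ω)) ⁻¹' {p : ℝ × ℝ | p.1 + p.2 ≤ t} := rfl
  rw [hpre, ← Measure.map_apply (hXm.prodMk hYm) hset,
    (indepFun_iff_map_prod_eq_prod_map_map hXm.aemeasurable hYm.aemeasurable).mp hindep,
    hX, hY, Measure.prod_apply hset]
  have hslice : ∀ x : ℝ, (Prod.mk x ⁻¹' {p : ℝ × ℝ | p.1 + p.2 ≤ t}) = Iic (t - x) := by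
    intro x; ext y; simp [Set.mem_Iic]; constructor <;> intro h <;> linarith
  simp_rw [hslice]
  have hg2 : ∀ x : ℝ, gaussianReal m2 v2 (Iic (t - x))
      = ∫⁻ u in Iic t, gaussianPDF m2 v2 (u - x) := by
    intro x
    rw [gaussianReal_of_var_ne_zero _ hv2, withDensity_apply _ measurableSet_Iic]
    rw [← lintegral_indicator measurableSet_Iic, ← lintegral_indicator measurableSet_Iic]
    rw [← lintegral_add_right_eq_self
      (fun u => (Iic t).indicator (fun u => gaussianPDF m2 v2 (u - x)) u) x]
    congr 1
    ext y
    by_cases h : y ≤ t - x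
    · rw [Set.indicator_of_mem (by simpa using h),
        Set.indicator_of_mem (by simp [Set.mem_Iic]; linarith), add_sub_cancel_right]
    · rw [Set.indicator_of_notMem (by simpa using h),
        Set.indicator_of_notMem (by simp only [Set.mem_Iic, not_le] at h ⊢; linarith)]
  simp_rw [hg2]
  rw [gaussianReal_of_var_ne_zero _ hv1]
  have hm2 : Measurable fun p : ℝ × ℝ => gaussianPDF m2 v2 (p.2 - p.1) :=
    (measurable_gaussianPDF m2 v2).comp (measurable_snd.sub measurable_fst)
  have hmF : Measurable fun x : ℝ => ∫⁻ u in Iic t, gaussianPDF m2 v2 (u - x) := by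
    exact Measurable.lintegral_prod_right hm2
  rw [lintegral_withDensity_eq_lintegral_mul _ (measurable_gaussianPDF m1 v1) hmF]
  have hpull : ∀ x : ℝ, gaussianPDF m1 v1 x * ∫⁻ u in Iic t, gaussianPDF m2 v2 (u - x)
      = ∫⁻ u in Iic t, gaussianPDF m1 v1 x * gaussianPDF m2 v2 (u - x) := by
    intro x
    have hmx : Measurable (fun u : ℝ => gaussianPDF m2 v2 (u - x)) :=
      (measurable_gaussianPDF m2 v2).comp (measurable_id.sub measurable_const)
    rw [← lintegral_const_mul _ hmx]
  simp only [Pi.mul_apply]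
  simp_rw [hpull]
  rw [lintegral_lintegral_swap]
  swap
  · exact ((measurable_gaussianPDF m1 v1).comp measurable_fst |>.mul
      ((measurable_gaussianPDF m2 v2).comp (measurable_snd.sub measurable_fst))).aemeasurable
  have hinner : ∀ u : ℝ, (∫⁻ x, gaussianPDF m1 v1 x * gaussianPDF m2 v2 (u - x))
      = gaussianPDF (m1 + m2) (v1 + v2) u := by
    intro u
    have hnn : 0 ≤ᵐ[volume] fun x => gaussianPDFReal m1 v1 x * gaussianPDFReal m2 v2 (u - x) :=
      ae_of_all _ fun x => mul_nonneg (gaussianPDFReal_nonneg _ _ _) (gaussianPDFReal_nonneg _ _ _)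
    have hbdd : ∀ y : ℝ, gaussianPDFReal m2 v2 y ≤ (Real.sqrt (2 * π * v2))⁻¹ := by
      intro y
      rw [gaussianPDFReal]
      calc (√(2 * π * ↑v2))⁻¹ * rexp (-(y - m2) ^ 2 / (2 * ↑v2))
          ≤ (√(2 * π * ↑v2))⁻¹ * 1 := by
            refine mul_le_mul_of_nonneg_left ?_ (by positivity)
            rw [Real.exp_le_one_iff]
            have h1 : -(y - m2)^2 ≤ 0 := by nlinarith [sq_nonneg (y - m2)]
            have h2v : (0:ℝ) ≤ 2 * (v2:ℝ) := by positivity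
            exact div_nonpos_of_nonpos_of_nonneg h1 h2v
        _ = (√(2 * π * ↑v2))⁻¹ := mul_one _
    have hint0 : Integrable fun x => gaussianPDFReal m2 v2 (u - x) * gaussianPDFReal m1 v1 x := by
      refine Integrable.bdd_mul (integrable_gaussianPDFReal m1 v1)
        (((measurable_gaussianPDFReal m2 v2).comp
          (measurable_const.sub measurable_id)).aestronglyMeasurable)
        (c := (Real.sqrt (2 * π * v2))⁻¹) (ae_of_all _ fun x => ?_)
      rw [Real.norm_eq_abs, abs_of_nonneg (gaussianPDFReal_nonneg _ _ _)]
      exact hbdd _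
    have hint : Integrable fun x => gaussianPDFReal m1 v1 x * gaussianPDFReal m2 v2 (u - x) := by
      simpa [mul_comm] using hint0
    simp_rw [gaussianPDF, ← ENNReal.ofReal_mul (gaussianPDFReal_nonneg m1 v1 _)]
    rw [← ofReal_integral_eq_lintegral_ofReal hint hnn, conv_pdf m1 m2 v1 v2 hv1 hv2 u]
  simp_rw [hinner]
  rw [gaussianReal_of_var_ne_zero _ (by simp [hv1]), withDensity_apply _ measurableSet_Iic]

lemma stdPDF_eq : gaussianPDFReal 0 1 = stdNormalPDF := by
  funext x
  simp [gaussianPDFReal, stdNormalPDF]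

lemma stdPDF_pos (x : ℝ) : 0 < stdNormalPDF x := by
  rw [stdNormalPDF]; positivity

lemma stdPDF_cont : Continuous stdNormalPDF := by
  unfold stdNormalPDF; fun_prop

lemma stdPDF_integrable : Integrable stdNormalPDF := by
  rw [← stdPDF_eq]; exact integrable_gaussianPDFReal 0 1

lemma cdf_eq_integral (x : ℝ) : stdNormalCDF x = ∫ t in Iic x, stdNormalPDF t := by
  rw [stdNormalCDF, gaussianReal_apply_eq_integral 0 one_ne_zero, stdPDF_eq,
    ENNReal.toReal_ofReal]
  exact setIntegral_nonneg measurableSet_Iic fun t _ => (stdPDF_pos t).le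

lemma cdf_nonneg (x : ℝ) : 0 ≤ stdNormalCDF x := ENNReal.toReal_nonneg

lemma cdf_le_one (x : ℝ) : stdNormalCDF x ≤ 1 := by
  rw [stdNormalCDF]
  exact ENNReal.toReal_le_of_le_ofReal zero_le_one (by simpa using prob_le_one)

lemma cdf_sub (x y : ℝ) : stdNormalCDF y - stdNormalCDF x = ∫ t in x..y, stdNormalPDF t := by
  rw [cdf_eq_integral, cdf_eq_integral]
  exact intervalIntegral.integral_Iic_sub_Iic (stdPDF_integrable.integrableOn)
    (stdPDF_integrable.integrableOn)

lemma cdf_hasDeriv (x : ℝ) : HasDerivAt stdNormalCDF (stdNormalPDF x) x := by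
  have h : ∀ y, stdNormalCDF y = stdNormalCDF 0 + ∫ t in (0:ℝ)..y, stdNormalPDF t := by
    intro y; rw [← cdf_sub 0 y]; ring
  have : HasDerivAt (fun y => stdNormalCDF 0 + ∫ t in (0:ℝ)..y, stdNormalPDF t)
      (stdNormalPDF x) x := by
    refine HasDerivAt.const_add _ ?_
    refine intervalIntegral.integral_hasDerivAt_right
      (stdPDF_integrable.intervalIntegrable) ?_ (stdPDF_cont.continuousAt)
    exact stdPDF_cont.stronglyMeasurable.stronglyMeasurableAtFilter
  simpa [← funext h] using this

lemma cdf_strictMono : StrictMono stdNormalCDF := by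
  intro x y hxy
  have : 0 < ∫ t in x..y, stdNormalPDF t :=
    intervalIntegral.intervalIntegral_pos_of_pos (stdPDF_integrable.intervalIntegrable)
      stdPDF_pos hxy
  have h := cdf_sub x y
  linarith

lemma cdf_tendsto_atTop : Tendsto stdNormalCDF atTop (𝓝 1) := by
  have h := tendsto_measure_Iic_atTop (gaussianReal 0 1)
  simp only [measure_univ] at h
  have := (ENNReal.tendsto_toReal ENNReal.one_ne_top).comp h
  exact this

lemma cdf_tendsto_atBot : Tendsto stdNormalCDF atBot (𝓝 0) := by
  have hIci := tendsto_measure_Ici_atBot (gaussianReal 0 1)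
  simp only [measure_univ] at hIci
  have hcomp : Tendsto (fun x : ℝ => ((gaussianReal 0 1) (Ici (x+1))).toReal) atBot (𝓝 1) := by
    have := ((ENNReal.tendsto_toReal ENNReal.one_ne_top).comp hIci).comp
      (tendsto_atBot_add_const_right atBot 1 tendsto_id)
    exact this
  have heq : ∀ x : ℝ, stdNormalCDF x = 1 - ((gaussianReal 0 1) (Ioi x)).toReal := by
    intro x
    rw [stdNormalCDF, ← Set.compl_Ioi, prob_compl_eq_one_sub measurableSet_Ioi,
      ENNReal.toReal_sub_of_le prob_le_one ENNReal.one_ne_top, ENNReal.toReal_one]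
  have hsq : Tendsto (fun x : ℝ => ((gaussianReal 0 1) (Ioi x)).toReal) atBot (𝓝 1) := by
    refine tendsto_of_tendsto_of_tendsto_of_le_of_le hcomp tendsto_const_nhds ?_ ?_
    · intro x
      refine ENNReal.toReal_mono (measure_ne_top _ _) (measure_mono ?_)
      intro y hy; exact lt_of_lt_of_le (by linarith : x < x + 1) hy
    · intro x
      exact ENNReal.toReal_le_of_le_ofReal zero_le_one
        (by simp only [ENNReal.ofReal_one]; exact prob_le_one)
  have hfe : stdNormalCDF = fun x => 1 - ((gaussianReal 0 1) (Ioi x)).toReal := funext heq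
  rw [hfe]
  have := tendsto_const_nhds.sub hsq (f := fun _ : ℝ => (1:ℝ))
  simpa using this

lemma cdf_mem_Ioo (x : ℝ) : stdNormalCDF x ∈ Ioo (0:ℝ) 1 := by
  constructor
  · exact lt_of_le_of_lt (cdf_nonneg (x-1)) (cdf_strictMono (by linarith))
  · exact lt_of_lt_of_le (cdf_strictMono (show x < x+1 by linarith)) (cdf_le_one (x+1))

lemma cdf_continuous : Continuous stdNormalCDF :=
  continuous_iff_continuousAt.mpr fun x => (cdf_hasDeriv x).continuousAt

lemma cdf_surj {p : ℝ} (hp : p ∈ Ioo (0:ℝ) 1) : ∃ x, stdNormalCDF x = p := by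
  obtain ⟨a, ha⟩ : ∃ a, stdNormalCDF a < p := by
    have := cdf_tendsto_atBot.eventually_lt_const hp.1
    exact this.exists
  obtain ⟨b, hb⟩ : ∃ b, p < stdNormalCDF b := by
    have := cdf_tendsto_atTop.eventually_const_lt hp.2
    exact this.exists
  have hab : a ≤ b := by
    by_contra h
    push_neg at h
    exact absurd (cdf_strictMono h) (by linarith)
  obtain ⟨x, _, hx⟩ := intermediate_value_Icc hab cdf_continuous.continuousOn
    (show p ∈ Icc (stdNormalCDF a) (stdNormalCDF b) from ⟨ha.le, hb.le⟩)
  exact ⟨x, hx⟩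


lemma cdf_set_eq {p x0 : ℝ} (hx0 : stdNormalCDF x0 = p) :
    {x : ℝ | p ≤ stdNormalCDF x} = Ici x0 := by
  ext x
  simp only [Set.mem_setOf_eq, Set.mem_Ici, ← hx0]
  exact cdf_strictMono.le_iff_le

lemma Qgauss_eq {p x0 : ℝ} (hx0 : stdNormalCDF x0 = p) : Qgauss p = x0 := by
  rw [Qgauss, cdf_set_eq hx0, csInf_Ici]

lemma cdf_Qgauss {p : ℝ} (hp : p ∈ Ioo (0:ℝ) 1) : stdNormalCDF (Qgauss p) = p := by
  obtain ⟨x0, hx0⟩ := cdf_surj hp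
  rw [Qgauss_eq hx0, hx0]

lemma Qgauss_cdf (x : ℝ) : Qgauss (stdNormalCDF x) = x := Qgauss_eq rfl

lemma gauss_cdf_formula (m s : ℝ) (hs : 0 < s) (y : ℝ) :
    ((gaussianReal m ((s^2).toNNReal)) (Iic y)).toReal = stdNormalCDF ((y - m) / s) := by
  have hv : ((s^2).toNNReal : ℝ≥0) = NNReal.mk (s^2) (sq_nonneg s) * 1 := by
    ext
    simp [Real.coe_toNNReal _ (sq_nonneg s)]
  have h1 : gaussianReal m ((s^2).toNNReal)
      = ((gaussianReal 0 1).map (s * ·)).map (· + m) := by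
    rw [gaussianReal_map_const_mul s, gaussianReal_map_add_const m]
    rw [hv]
    norm_num
  rw [h1, Measure.map_apply (by fun_prop) measurableSet_Iic]
  have hpre : ((· + m) ⁻¹' Iic y) = Iic (y - m) := by
    ext z; simp [Set.mem_Iic]
  rw [hpre, Measure.map_apply (by fun_prop) measurableSet_Iic]
  have hpre2 : ((s * ·) ⁻¹' Iic (y - m)) = Iic ((y - m) / s) := by
    ext z
    simp only [Set.mem_preimage, Set.mem_Iic]
    rw [le_div_iff₀ hs, mul_comm]
  rw [hpre2, stdNormalCDF]

lemma VaR_gauss {Ω : Type*} [MeasurableSpace Ω] (P : Measure Ω) [IsProbabilityMeasure P]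
    (Y : Ω → ℝ) (hYm : Measurable Y) {m s : ℝ} (hs : 0 < s)
    (hmap : P.map (fun ω => -Y ω) = gaussianReal m ((s^2).toNNReal))
    {β : ℝ} (hβ : β ∈ Ioo (0:ℝ) 1) :
    VaR P β Y = m + s * Qgauss (1 - β) := by
  have h1β : (1 - β) ∈ Ioo (0:ℝ) 1 := ⟨by linarith [hβ.2], by linarith [hβ.1]⟩
  have hcdf : ∀ y : ℝ, (P {ω | -Y ω ≤ y}).toReal = stdNormalCDF ((y - m) / s) := by
    intro y
    have : {ω | -Y ω ≤ y} = (fun ω => -Y ω) ⁻¹' (Iic y) := rfl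
    rw [this, ← Measure.map_apply (f := fun ω => -Y ω) hYm.neg measurableSet_Iic, hmap, gauss_cdf_formula m s hs y]
  set x0 := Qgauss (1 - β) with hdef
  have hx0 : stdNormalCDF x0 = 1 - β := cdf_Qgauss h1β
  have hset : {y : ℝ | 1 - β ≤ (P {ω | -Y ω ≤ y}).toReal} = Ici (m + s * x0) := by
    ext y
    rw [Set.mem_setOf_eq, hcdf y, ← hx0, Set.mem_Ici]
    rw [cdf_strictMono.le_iff_le, le_div_iff₀ hs]
    constructor <;> intro h <;> linarith
  rw [VaR, hset, csInf_Ici]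

lemma pdf_hasDeriv (x : ℝ) :
    HasDerivAt (fun y => -stdNormalPDF y) (x * stdNormalPDF x) x := by
  have h1 : HasDerivAt (fun y : ℝ => -y^2/2) (-x) x := by
    have := ((hasDerivAt_pow 2 x).neg.div_const 2)
    simpa using this.congr_deriv (by ring)
  have h2 : HasDerivAt (fun y : ℝ => rexp (-y^2/2)) (rexp (-x^2/2) * (-x)) x := h1.exp
  have h3 := (h2.const_mul (Real.sqrt (2*π))⁻¹).neg
  have : stdNormalPDF = fun y => (Real.sqrt (2*π))⁻¹ * rexp (-y^2/2) := rfl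
  rw [this]
  refine h3.congr_deriv ?_
  beta_reduce
  ring

lemma xpdf_integrableOn (q : ℝ) : IntegrableOn (fun x => x * stdNormalPDF x) (Ioi q) := by
  have h : (fun x : ℝ => x * stdNormalPDF x)
      = fun x => (Real.sqrt (2*π))⁻¹ * (x * rexp (-(2⁻¹) * x^2)) := by
    funext x
    rw [stdNormalPDF]
    ring_nf
  rw [h]
  exact ((integrable_mul_exp_neg_mul_sq (by norm_num : (0:ℝ) < 2⁻¹)).const_mul _).integrableOn

lemma pdf_tendsto_zero : Tendsto stdNormalPDF atTop (𝓝 0) := by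
  have h1 : Tendsto (fun x : ℝ => x^2/2) atTop atTop :=
    (tendsto_pow_atTop (by norm_num)).atTop_div_const (by norm_num)
  have h2 : Tendsto (fun x : ℝ => -x^2/2) atTop atBot := by
    simp only [neg_div]
    exact tendsto_neg_atBot_iff.mpr h1
  have h3 := Real.tendsto_exp_atBot.comp h2
  have : stdNormalPDF = fun y => (Real.sqrt (2*π))⁻¹ * rexp (-y^2/2) := rfl
  rw [this]
  simpa using (h3.const_mul (Real.sqrt (2*π))⁻¹)

lemma xpdf_integral (q : ℝ) : ∫ x in Ioi q, x * stdNormalPDF x = stdNormalPDF q := by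
  have := MeasureTheory.integral_Ioi_of_hasDerivAt_of_tendsto'
    (f := fun y => -stdNormalPDF y) (f' := fun x => x * stdNormalPDF x) (a := q)
    (fun x _ => pdf_hasDeriv x) (xpdf_integrableOn q)
    (by simpa using pdf_tendsto_zero.neg)
  simpa using this

lemma img_eq {α q : ℝ} (hα : α ∈ Ioo (0:ℝ) 1) (hq : stdNormalCDF q = 1 - α) :
    (fun x => 1 - stdNormalCDF x) '' (Ioi q) = Ioo 0 α := by
  ext β
  constructor
  · rintro ⟨x, hx, rfl⟩
    have h1 : stdNormalCDF q < stdNormalCDF x := cdf_strictMono hx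
    have h2 := (cdf_mem_Ioo x).2
    rw [hq] at h1
    simp only [Set.mem_Ioo]
    exact ⟨by linarith, by linarith⟩
  · intro hβ
    have h1β : (1 - β) ∈ Ioo (0:ℝ) 1 := ⟨by linarith [hβ.2, hα.2], by linarith [hβ.1]⟩
    refine ⟨Qgauss (1 - β), ?_, by simp only [cdf_Qgauss h1β]; ring⟩
    rw [Set.mem_Ioi, ← cdf_strictMono.lt_iff_lt, hq, cdf_Qgauss h1β]
    linarith [hβ.2]

lemma deriv_g (q : ℝ) : ∀ x ∈ Ioi q,
    HasDerivWithinAt (fun x => 1 - stdNormalCDF x) (-stdNormalPDF x) (Ioi q) x :=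
  fun x _ => ((cdf_hasDeriv x).const_sub 1).hasDerivWithinAt

lemma anti_g : StrictAnti (fun x => 1 - stdNormalCDF x) := by
  intro a b hab
  have := cdf_strictMono hab
  simp only
  linarith

lemma inj_g (q : ℝ) : InjOn (fun x => 1 - stdNormalCDF x) (Ioi q) :=
  anti_g.injective.injOn

lemma Q_integrand_eq (q : ℝ) : ∀ x ∈ Ioi q,
    |(-stdNormalPDF x)| • Qgauss (1 - (1 - stdNormalCDF x)) = x * stdNormalPDF x := by
  intro x _
  rw [abs_neg, abs_of_pos (stdPDF_pos x), smul_eq_mul]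
  have : (1 : ℝ) - (1 - stdNormalCDF x) = stdNormalCDF x := by ring
  rw [this, Qgauss_cdf]
  ring

lemma Q_integral {α q : ℝ} (hα : α ∈ Ioo (0:ℝ) 1) (hq : stdNormalCDF q = 1 - α) :
    ∫ β in Ioo (0:ℝ) α, Qgauss (1 - β) = stdNormalPDF q := by
  have h := integral_image_eq_integral_abs_deriv_smul measurableSet_Ioi (deriv_g q)
    (inj_g q) (fun β => Qgauss (1 - β))
  rw [img_eq hα hq] at h
  rw [h, setIntegral_congr_fun measurableSet_Ioi (Q_integrand_eq q), xpdf_integral q]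

lemma Q_integrableOn {α q : ℝ} (hα : α ∈ Ioo (0:ℝ) 1) (hq : stdNormalCDF q = 1 - α) :
    IntegrableOn (fun β => Qgauss (1 - β)) (Ioo 0 α) := by
  have h := integrableOn_image_iff_integrableOn_abs_deriv_smul measurableSet_Ioi (deriv_g q)
    (inj_g q) (fun β => Qgauss (1 - β))
  rw [img_eq hα hq] at h
  rw [h]
  exact (xpdf_integrableOn q).congr_fun (fun x hx => (Q_integrand_eq q x hx).symm) measurableSet_Ioi

lemma ES_gauss {Ω : Type*} [MeasurableSpace Ω] (P : Measure Ω) [IsProbabilityMeasure P]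
    {α q : ℝ} (hα : α ∈ Ioo (0:ℝ) 1) (hq : stdNormalCDF q = 1 - α)
    (Y : Ω → ℝ) (hYm : Measurable Y) {m s : ℝ} (hs : 0 < s)
    (hmap : P.map (fun ω => -Y ω) = gaussianReal m ((s^2).toNNReal)) :
    ES P α Y = m + s * (stdNormalPDF q / α) := by
  have hα0 : (0:ℝ) < α := hα.1
  have hint : ∫ β in (0:ℝ)..α, VaR P β Y
      = ∫ β in Ioo (0:ℝ) α, (m + s * Qgauss (1 - β)) := by
    rw [intervalIntegral.integral_of_le hα0.le, MeasureTheory.integral_Ioc_eq_integral_Ioo]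
    refine setIntegral_congr_fun measurableSet_Ioo (fun β hβ => ?_)
    exact VaR_gauss P Y hYm hs hmap ⟨hβ.1, lt_trans hβ.2 hα.2⟩
  have hI1 : IntegrableOn (fun _ : ℝ => m) (Ioo 0 α) :=
    integrableOn_const measure_Ioo_lt_top.ne
  have hI2 : IntegrableOn (fun β => s * Qgauss (1 - β)) (Ioo 0 α) :=
    (Q_integrableOn hα hq).const_mul s
  have hsplit : ∫ β in Ioo (0:ℝ) α, (m + s * Qgauss (1 - β))
      = (∫ _ in Ioo (0:ℝ) α, m) + ∫ β in Ioo (0:ℝ) α, s * Qgauss (1 - β) :=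
    integral_add hI1 hI2
  have hc : (∫ _ in Ioo (0:ℝ) α, m) = α * m := by
    rw [setIntegral_const, measureReal_def, Real.volume_Ioo, sub_zero, ENNReal.toReal_ofReal hα0.le, smul_eq_mul]
  have hq2 : ∫ β in Ioo (0:ℝ) α, s * Qgauss (1 - β) = s * stdNormalPDF q := by
    rw [MeasureTheory.integral_const_mul, Q_integral hα hq]
  rw [ES, hint, hsplit, hc, hq2]
  field_simp

lemma law_negY {Ω : Type*} [MeasurableSpace Ω] (P : Measure Ω) [IsProbabilityMeasure P]
    (γ ν μ σ : ℝ) (hν : 0 < ν) (hσ : 0 < σ)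
    (X1 Z1 : Ω → ℝ) (hX1m : Measurable X1) (hZ1m : Measurable Z1)
    (hX : P.map X1 = gaussianReal γ (ν ^ 2).toNNReal)
    (hZ : P.map Z1 = gaussianReal μ (σ ^ 2).toNNReal)
    (hindep : IndepFun X1 Z1 P) (r : ℝ) (hr : 0 < r) :
    P.map (fun ω => -(r * Z1 ω - X1 ω))
      = gaussianReal (γ - r * μ) (((Real.sqrt (ν^2 + r^2 * σ^2))^2).toNNReal) := by
  have hfun : (fun ω => -(r * Z1 ω - X1 ω)) = fun ω => X1 ω + (fun x => -r * x) (Z1 ω) :=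
    funext fun ω => by simp only; ring
  have hWm : Measurable fun ω => (fun x => -r * x) (Z1 ω) :=
    (measurable_const_mul (-r)).comp hZ1m
  have hW : P.map (fun ω => (fun x : ℝ => -r * x) (Z1 ω))
      = gaussianReal (-r * μ) (NNReal.mk ((-r)^2) (sq_nonneg _) * (σ^2).toNNReal) := by
    have : (fun ω => (fun x : ℝ => -r * x) (Z1 ω)) = (fun x : ℝ => -r * x) ∘ Z1 := rfl
    rw [this, ← Measure.map_map (measurable_const_mul (-r)) hZ1m, hZ]
    exact gaussianReal_map_const_mul (-r)
  have hindep' : IndepFun X1 (fun ω => (fun x : ℝ => -r * x) (Z1 ω)) P := by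
    have := hindep.comp measurable_id (measurable_const_mul (-r))
    exact this
  have hv1 : ((ν^2).toNNReal : ℝ≥0) ≠ 0 := by
    simp only [ne_eq, Real.toNNReal_eq_zero, not_le]
    exact pow_pos hν 2
  have hv2 : (NNReal.mk ((-r)^2) (sq_nonneg _) * (σ^2).toNNReal : ℝ≥0) ≠ 0 := by
    refine mul_ne_zero ?_ ?_
    · rw [← NNReal.coe_ne_zero]
      simp only [NNReal.coe_mk]
      nlinarith
    · simp only [ne_eq, Real.toNNReal_eq_zero, not_le]
      exact pow_pos hσ 2
  have hsum := gauss_map_add P hX1m hWm hindep' hv1 hv2 hX hW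
  rw [hfun, hsum]
  congr 1
  · ring
  · ext
    push_cast
    rw [Real.coe_toNNReal _ (sq_nonneg ν), Real.coe_toNNReal _ (sq_nonneg σ),
      Real.coe_toNNReal _ (sq_nonneg _), Real.sq_sqrt (by positivity)]
    ring

lemma ES_formula {Ω : Type*} [MeasurableSpace Ω] (P : Measure Ω) [IsProbabilityMeasure P]
    {α : ℝ} (hα : α ∈ Ioo (0:ℝ) 1) {q : ℝ} (hq : stdNormalCDF q = 1 - α)
    (γ ν μ σ : ℝ) (hν : 0 < ν) (hσ : 0 < σ)
    (X1 Z1 : Ω → ℝ) (hX1m : Measurable X1) (hZ1m : Measurable Z1)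
    (hX : P.map X1 = gaussianReal γ (ν ^ 2).toNNReal)
    (hZ : P.map Z1 = gaussianReal μ (σ ^ 2).toNNReal)
    (hindep : IndepFun X1 Z1 P) (r : ℝ) (hr : 0 < r) :
    ES P α (fun ω => r * Z1 ω - X1 ω)
      = (γ - r * μ) + Real.sqrt (ν^2 + r^2 * σ^2) * (stdNormalPDF q / α) := by
  have hlaw := law_negY P γ ν μ σ hν hσ X1 Z1 hX1m hZ1m hX hZ hindep r hr
  have hs : 0 < Real.sqrt (ν^2 + r^2 * σ^2) := Real.sqrt_pos.mpr (by positivity)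
  exact ES_gauss P hα hq _ ((hZ1m.const_mul r).sub hX1m) hs hlaw


set_option maxHeartbeats 1000000 in
/-- the Expected-Shortfall capital requirement in the Gaussian
model: explicit unique positive solution if `μ > σ·ψ`, and no positive
solution if `μ ≤ σ·ψ`, where `ψ = φ(Φ⁻¹(1−α))/α`. -/
theorem R0_gaussian_ES
    {Ω : Type*} [MeasurableSpace Ω] (P : Measure Ω) [IsProbabilityMeasure P]
    (α : ℝ) (hα : α ∈ Ioo (0:ℝ) 1)
    (q : ℝ) (hq : stdNormalCDF q = 1 - α)
    (γ ν μ σ : ℝ) (hγ : 0 < γ) (hν : 0 < ν) (hμ : 0 < μ) (hσ : 0 < σ)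
    (X1 Z1 : Ω → ℝ) (hX1m : Measurable X1) (hZ1m : Measurable Z1)
    (hX : P.map X1 = gaussianReal γ (ν ^ 2).toNNReal)
    (hZ : P.map Z1 = gaussianReal μ (σ ^ 2).toNNReal)
    (hindep : IndepFun X1 Z1 P) :
    let ψ := stdNormalPDF q / α
    (σ * ψ < μ →
      (let R0 := (μ * γ + ψ * Real.sqrt (γ^2 * σ^2 + μ^2 * ν^2 - σ^2 * ν^2 * ψ^2))
          / (μ^2 - σ^2 * ψ^2)
       0 < R0 ∧ ES P α (fun ω => R0 * Z1 ω - X1 ω) = 0 ∧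
       ∀ r : ℝ, 0 < r → ES P α (fun ω => r * Z1 ω - X1 ω) = 0 → r = R0))
    ∧ (μ ≤ σ * ψ →
        ∀ r : ℝ, 0 < r → ES P α (fun ω => r * Z1 ω - X1 ω) ≠ 0) := by
  intro ψ
  have hψdef : ψ = stdNormalPDF q / α := rfl
  have hψ : 0 < ψ := by rw [hψdef]; exact div_pos (stdPDF_pos q) hα.1
  have hES : ∀ r : ℝ, 0 < r → ES P α (fun ω => r * Z1 ω - X1 ω)
      = (γ - r * μ) + Real.sqrt (ν^2 + r^2 * σ^2) * ψ := by
    intro r hr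
    rw [hψdef]
    exact ES_formula P hα hq γ ν μ σ hν hσ X1 Z1 hX1m hZ1m hX hZ hindep r hr
  clear_value ψ
  clear hψdef
  have hsfacts : ∀ r : ℝ, 0 < Real.sqrt (ν^2 + r^2 * σ^2)
      ∧ (Real.sqrt (ν^2 + r^2 * σ^2))^2 = ν^2 + r^2 * σ^2 :=
    fun r => ⟨Real.sqrt_pos.mpr (by positivity), Real.sq_sqrt (by positivity)⟩
  -- generic consequences of ES = 0
  have hgen : ∀ r : ℝ, 0 < r → ES P α (fun ω => r * Z1 ω - X1 ω) = 0 →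
      0 < r * μ - γ ∧ (r * μ - γ)^2 = ψ^2 * (ν^2 + r^2 * σ^2) := by
    intro r hr h0
    rw [hES r hr] at h0
    have hsr := (hsfacts r).1
    have hsr2 := (hsfacts r).2
    have heq : Real.sqrt (ν^2 + r^2 * σ^2) * ψ = r * μ - γ := by linarith
    have hrpos : 0 < r * μ - γ := by nlinarith [mul_pos hsr hψ]
    refine ⟨hrpos, ?_⟩
    linear_combination ψ^2 * hsr2 - (Real.sqrt (ν^2 + r^2 * σ^2) * ψ + r * μ - γ) * heq
  constructor
  · -- case σψ < μ
    intro hc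
    intro R0
    have hσψ : 0 < σ * ψ := mul_pos hσ hψ
    have hd : 0 < μ^2 - σ^2 * ψ^2 := by
      nlinarith [mul_pos (sub_pos.mpr hc) (by positivity : (0:ℝ) < μ + σ * ψ)]
    have hD : 0 < γ^2 * σ^2 + μ^2 * ν^2 - σ^2 * ν^2 * ψ^2 := by
      nlinarith [mul_pos (pow_pos hν 2) hd, mul_pos (pow_pos hγ 2) (pow_pos hσ 2)]
    set w := Real.sqrt (γ^2 * σ^2 + μ^2 * ν^2 - σ^2 * ν^2 * ψ^2) with hwdef
    have hw : 0 < w := Real.sqrt_pos.mpr hD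
    have hw2 : w^2 = γ^2 * σ^2 + μ^2 * ν^2 - σ^2 * ν^2 * ψ^2 := Real.sq_sqrt hD.le
    have hR0 : R0 = (μ * γ + ψ * w) / (μ^2 - σ^2 * ψ^2) := rfl
    clear_value R0
    clear_value w
    have hR0d : R0 * (μ^2 - σ^2 * ψ^2) = μ * γ + ψ * w := by
      rw [hR0]; exact div_mul_cancel₀ _ hd.ne'
    have hR0pos : 0 < R0 := by rw [hR0]; positivity
    have h1 : (R0 * μ - γ) * (μ^2 - σ^2 * ψ^2) = ψ * (μ * w + γ * σ^2 * ψ) := by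
      linear_combination μ * hR0d
    have hnum : 0 < R0 * μ - γ := by
      nlinarith [h1, mul_pos hμ hw, mul_pos (mul_pos hγ (pow_pos hσ 2)) hψ, hd]
    have h2d : (R0 * μ - γ)^2 * (μ^2 - σ^2 * ψ^2)
        = (ψ^2 * (ν^2 + R0^2 * σ^2)) * (μ^2 - σ^2 * ψ^2) := by
      linear_combination ψ^2 * hw2 + (R0 * (μ^2 - σ^2 * ψ^2) + ψ * w - μ * γ) * hR0d
    have h2 : (R0 * μ - γ)^2 = ψ^2 * (ν^2 + R0^2 * σ^2) :=
      mul_right_cancel₀ hd.ne' h2d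
    have hkey : ν^2 + R0^2 * σ^2 = ((R0 * μ - γ) / ψ)^2 := by
      field_simp
      linarith [h2]
    refine ⟨hR0pos, ?_, ?_⟩
    · rw [hES R0 hR0pos, hkey, Real.sqrt_sq (by positivity)]
      field_simp
      ring
    · intro r hr hES0
      obtain ⟨hrpos, hsq⟩ := hgen r hr hES0
      have hfact : (r - R0) * ((μ^2 - σ^2 * ψ^2) * (r + R0) - 2 * μ * γ) = 0 := by
        linear_combination hsq - h2
      rcases mul_eq_zero.mp hfact with h | h
      · linarith [sub_eq_zero.mp h]
      · exfalso
        have hrd : r * (μ^2 - σ^2 * ψ^2) = μ * γ - ψ * w := by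
          linear_combination h - hR0d
        have hw2m : μ^2 * w^2 = μ^2 * (γ^2 * σ^2 + μ^2 * ν^2 - σ^2 * ν^2 * ψ^2) := by
          linear_combination μ^2 * hw2
        have hsq2 : (γ * σ^2 * ψ)^2 < (μ * w)^2 := by
          nlinarith [hw2m, mul_pos hd (by positivity : (0:ℝ) < γ^2 * σ^2 + μ^2 * ν^2)]
        have hμw : γ * σ^2 * ψ < μ * w :=
          lt_of_pow_lt_pow_left₀ 2 (by positivity) hsq2
        have hmul : r * μ * (μ^2 - σ^2 * ψ^2) = μ^2 * γ - μ * (ψ * w) := by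
          linear_combination μ * hrd
        have hψγ : ψ * (γ * σ^2 * ψ) < ψ * (μ * w) := by
          exact mul_lt_mul_of_pos_left hμw hψ
        linarith [hmul, hψγ, mul_pos hrpos hd]
  · -- case μ ≤ σψ
    intro hc r hr hES0
    obtain ⟨hrpos, hsq⟩ := hgen r hr hES0
    have h1 : μ^2 ≤ σ^2 * ψ^2 := by nlinarith
    nlinarith [hsq, mul_nonneg (sub_nonneg.mpr h1) (sq_nonneg r), mul_pos hrpos hγ,
      mul_pos (pow_pos hψ 2) (pow_pos hν 2)]
end
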